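/- arXiv:2406.09955 — 2 statements merged into one kernel-verified Lean document; each statement's English description precedes it below -/
import Mathlib

section
/- Let Q be a bounded sublinear rate operator on ℬ, and for each t ≥ 0 let e^{tQ} denote the limit in operator seminorm of the sequence ((I + (t/n)Q)^n)_{n∈ℕ}. Then for every t ≥ 0, the difference quotient (e^{sQ} − e^{tQ})/(s − t) converges in operator seminorm to Q ∘ e^{tQ} as s → t (with s ≥ 0, s ≠ t); that is, ‖(e^{sQ} − e^{tQ})/(s − t) − Q∘e^{tQ}‖ → 0 as s → t. -/
open Filter Topology BoundedContinuousFunction ENNReal NNReal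

/-- The space of (possibly nonlinear) operators on the Banach space `X →ᵇ ℝ`
of bounded (continuous, i.e. with `X` discrete: all) real-valued functions. -/
abbrev Op (X : Type*) [TopologicalSpace X] :=
  BoundedContinuousFunction X ℝ → BoundedContinuousFunction X ℝ

/-- The operator seminorm `‖A‖ = sup {‖A f‖/‖f‖ : f ≠ 0}`, a value in `[0,∞]`. -/
noncomputable def opSemiNorm {X : Type*} [TopologicalSpace X] (A : Op X) : ℝ≥0∞ :=
  ⨆ (f : BoundedContinuousFunction X ℝ) (_ : f ≠ 0), (‖A f‖₊ : ℝ≥0∞) / (‖f‖₊ : ℝ≥0∞)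

/-- The operator norm distance `d(A,B) = ‖A 0 − B 0‖∞ + ‖A − B‖`. -/
noncomputable def opDist {X : Type*} [TopologicalSpace X] (A B : Op X) : ℝ≥0∞ :=
  (‖A 0 - B 0‖₊ : ℝ≥0∞) + opSemiNorm (A - B)

/-- Sublinear transition operator: (T1) positive homogeneity, (T2) subadditivity,
(T3) `T f ≤ sup f` pointwise. -/
def IsSublinearTransition {X : Type*} [TopologicalSpace X] (T : Op X) : Prop :=
  (∀ (c : ℝ), 0 ≤ c → ∀ f, T (c • f) = c • T f) ∧
  (∀ f g, ∀ x, T (f + g) x ≤ T f x + T g x) ∧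
  (∀ f, ∀ x, T f x ≤ ⨆ y, f y)

/-- Sublinear rate operator: (Q1) positive homogeneity, (Q2) subadditivity,
(Q3) constants map to zero, (Q4) positive maximum principle. -/
def IsSublinearRate {X : Type*} [TopologicalSpace X] (Q : Op X) : Prop :=
  (∀ (c : ℝ), 0 ≤ c → ∀ f, Q (c • f) = c • Q f) ∧
  (∀ f g, ∀ x, Q (f + g) x ≤ Q f x + Q g x) ∧
  (∀ (c : ℝ), Q (BoundedContinuousFunction.const X c) = 0) ∧
  (∀ f, ∀ x : X, (⨆ y, f y) = f x → 0 ≤ f x → Q f x ≤ 0)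

/-- The Euler approximation `(I + (t/n) Q)^n` (n-fold composition). -/
noncomputable def euler {X : Type*} [TopologicalSpace X] (Q : Op X) (t : ℝ) (n : ℕ) : Op X :=
  (fun f => f + (t / (n : ℝ)) • Q f)^[n]

/-- Uniform continuity of a semigroup `(S_t)_{t ≥ 0}`:
`‖S_s − S_t‖ → 0` as `s → t` (within `s ≥ 0`), for every `t ≥ 0`. -/
def IsUniformlyContinuousSG {X : Type*} [TopologicalSpace X] (S : ℝ → Op X) : Prop :=
  ∀ t : ℝ, 0 ≤ t →
    Tendsto (fun s => opSemiNorm (S s - S t)) (nhdsWithin t (Set.Ici 0)) (nhds 0)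

/-- The indicator function `1_x` of the singleton `{x}`. -/
noncomputable def indic {X : Type*} [TopologicalSpace X] [DiscreteTopology X] (x : X) :
    BoundedContinuousFunction X ℝ :=
  BoundedContinuousFunction.ofNormedAddCommGroup
    (Set.indicator {x} (fun _ => (1 : ℝ))) continuous_of_discreteTopology 1
    (by
      intro y
      classical
      rw [Set.indicator_apply]
      split_ifs <;> simp)

/-- Downward continuity (continuity from above) of an operator. -/
def DownwardContinuous {X : Type*} [TopologicalSpace X] (A : Op X) : Prop :=
  ∀ (f : ℕ → BoundedContinuousFunction X ℝ) (g : BoundedContinuousFunction X ℝ),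
    (∀ n x, f (n + 1) x ≤ f n x) →
    (∀ x, Tendsto (fun n => f n x) atTop (nhds (g x))) →
    ∀ x, Tendsto (fun n => A (f n) x) atTop (nhds (A g x))

section EulerEst
variable {X : Type*} [TopologicalSpace X]

/-- single Euler step -/
noncomputable def estep (Q : Op X) (δ : ℝ) : Op X := fun f => f + δ • Q f

lemma euler_eq (Q : Op X) (t : ℝ) (n : ℕ) : euler Q t n = (estep Q (t / n))^[n] := rfl

variable (Q : Op X) {L : ℝ} (hL : 0 ≤ L)
  (hlip : ∀ f g : BoundedContinuousFunction X ℝ, ‖Q f - Q g‖ ≤ L * ‖f - g‖)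
  (hQ0 : Q 0 = 0)

include hlip hQ0 in
lemma qnorm (f : BoundedContinuousFunction X ℝ) : ‖Q f‖ ≤ L * ‖f‖ := by
  simpa [hQ0] using hlip f 0

include hL hlip in
lemma estep_lip {δ : ℝ} (hδ : 0 ≤ δ) (f g : BoundedContinuousFunction X ℝ) :
    ‖estep Q δ f - estep Q δ g‖ ≤ Real.exp (δ * L) * ‖f - g‖ := by
  have h1 : estep Q δ f - estep Q δ g = (f - g) + δ • (Q f - Q g) := by
    simp only [estep, smul_sub]; abel
  calc ‖estep Q δ f - estep Q δ g‖ ≤ ‖f - g‖ + ‖δ • (Q f - Q g)‖ := by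
        rw [h1]; exact norm_add_le _ _
    _ ≤ ‖f - g‖ + δ * (L * ‖f - g‖) := by
        have : ‖δ • (Q f - Q g)‖ = δ * ‖Q f - Q g‖ := by
          rw [norm_smul δ (Q f - Q g), Real.norm_of_nonneg hδ]
        rw [this]
        gcongr
        exact hlip f g
    _ = (1 + δ * L) * ‖f - g‖ := by ring
    _ ≤ Real.exp (δ * L) * ‖f - g‖ := by
        have h2 : 1 + δ * L ≤ Real.exp (δ * L) := by
          rw [add_comm]; exact Real.add_one_le_exp _
        exact mul_le_mul_of_nonneg_right h2 (norm_nonneg _)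

include hL hlip in
lemma iter_lip {δ : ℝ} (hδ : 0 ≤ δ) (f g : BoundedContinuousFunction X ℝ) (n : ℕ) :
    ‖(estep Q δ)^[n] f - (estep Q δ)^[n] g‖ ≤ Real.exp (n * δ * L) * ‖f - g‖ := by
  induction n with
  | zero => simp
  | succ n ih =>
    rw [Function.iterate_succ_apply', Function.iterate_succ_apply']
    calc ‖estep Q δ ((estep Q δ)^[n] f) - estep Q δ ((estep Q δ)^[n] g)‖
        ≤ Real.exp (δ * L) * ‖(estep Q δ)^[n] f - (estep Q δ)^[n] g‖ :=
          estep_lip Q hL hlip hδ _ _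
      _ ≤ Real.exp (δ * L) * (Real.exp (n * δ * L) * ‖f - g‖) := by
          gcongr
      _ = Real.exp ((n + 1 : ℕ) * δ * L) * ‖f - g‖ := by
          rw [← mul_assoc, ← Real.exp_add]
          push_cast
          ring_nf

include hQ0 in
lemma iter_zero (δ : ℝ) (n : ℕ) : (estep Q δ)^[n] 0 = 0 :=
  Function.iterate_fixed (by simp [estep, hQ0]) n

include hL hlip hQ0 in
lemma iter_growth {δ : ℝ} (hδ : 0 ≤ δ) (f : BoundedContinuousFunction X ℝ) (n : ℕ) :
    ‖(estep Q δ)^[n] f‖ ≤ Real.exp (n * δ * L) * ‖f‖ := by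
  simpa [iter_zero Q hQ0] using iter_lip Q hL hlip hδ f 0 n

include hL hlip hQ0 in
lemma iter_drift {δ : ℝ} (hδ : 0 ≤ δ) (f : BoundedContinuousFunction X ℝ) (n : ℕ) :
    ‖(estep Q δ)^[n] f - f‖ ≤ n * δ * L * Real.exp (n * δ * L) * ‖f‖ := by
  induction n with
  | zero => simp
  | succ n ih =>
    rw [Function.iterate_succ_apply']
    have hstep : ‖estep Q δ ((estep Q δ)^[n] f) - (estep Q δ)^[n] f‖
        ≤ δ * (L * (Real.exp (n * δ * L) * ‖f‖)) := by
      have : estep Q δ ((estep Q δ)^[n] f) - (estep Q δ)^[n] f = δ • Q ((estep Q δ)^[n] f) := by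
        simp [estep]
      rw [this, norm_smul δ (Q ((estep Q δ)^[n] f)), Real.norm_of_nonneg hδ]
      gcongr
      calc ‖Q ((estep Q δ)^[n] f)‖ ≤ L * ‖(estep Q δ)^[n] f‖ := qnorm Q hlip hQ0 _
        _ ≤ L * (Real.exp (n * δ * L) * ‖f‖) := by
            gcongr
            exact iter_growth Q hL hlip hQ0 hδ f n
    have hmono : Real.exp (n * δ * L) ≤ Real.exp ((n+1 : ℕ) * δ * L) := by
      apply Real.exp_le_exp.mpr
      push_cast
      nlinarith
    calc ‖estep Q δ ((estep Q δ)^[n] f) - f‖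
        ≤ ‖estep Q δ ((estep Q δ)^[n] f) - (estep Q δ)^[n] f‖ + ‖(estep Q δ)^[n] f - f‖ :=
          norm_sub_le_norm_sub_add_norm_sub _ _ _
      _ ≤ δ * (L * (Real.exp (n * δ * L) * ‖f‖)) + n * δ * L * Real.exp (n * δ * L) * ‖f‖ := by
          gcongr
      _ ≤ δ * (L * (Real.exp ((n+1:ℕ) * δ * L) * ‖f‖)) + n * δ * L * Real.exp ((n+1:ℕ) * δ * L) * ‖f‖ := by
          gcongr <;> positivity
      _ = (n+1 : ℕ) * δ * L * Real.exp ((n+1:ℕ) * δ * L) * ‖f‖ := by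
          push_cast
          ring

include hL hlip hQ0 in
lemma euler_taylor {δ : ℝ} (hδ : 0 ≤ δ) (f : BoundedContinuousFunction X ℝ) (m : ℕ) :
    ∀ j, j ≤ m → ‖f + ((j : ℝ) * δ) • Q f - (estep Q δ)^[j] f‖
      ≤ (j : ℝ) * m * δ^2 * L^2 * Real.exp (m * δ * L) * ‖f‖ := by
  intro j
  induction j with
  | zero => simp
  | succ j ih =>
    intro hj1
    have hj : j ≤ m := Nat.le_of_succ_le hj1
    have ihj := ih hj
    rw [Function.iterate_succ_apply']
    push_cast
    have hsplit : f + (((j:ℝ)+1) * δ) • Q f - estep Q δ ((estep Q δ)^[j] f)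
        = (f + ((j:ℝ) * δ) • Q f - (estep Q δ)^[j] f) + δ • (Q f - Q ((estep Q δ)^[j] f)) := by
      simp only [estep, smul_sub, add_mul, add_smul, one_mul]
      abel
    have hdrift : ‖f - (estep Q δ)^[j] f‖ ≤ (m : ℝ) * δ * L * Real.exp (m * δ * L) * ‖f‖ := by
      rw [norm_sub_rev]
      calc ‖(estep Q δ)^[j] f - f‖ ≤ (j:ℝ) * δ * L * Real.exp ((j:ℝ) * δ * L) * ‖f‖ :=
            iter_drift Q hL hlip hQ0 hδ f j
        _ ≤ (m : ℝ) * δ * L * Real.exp (m * δ * L) * ‖f‖ := by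
            have hjm : (j : ℝ) ≤ (m : ℝ) := by exact_mod_cast hj
            have : Real.exp ((j:ℝ) * δ * L) ≤ Real.exp ((m:ℝ) * δ * L) := by
              apply Real.exp_le_exp.mpr
              exact mul_le_mul_of_nonneg_right (mul_le_mul_of_nonneg_right hjm hδ) hL
            have h0 : (0:ℝ) ≤ δ * L * Real.exp ((j:ℝ)*δ*L) * ‖f‖ := by positivity
            nlinarith [norm_nonneg f, Real.exp_nonneg ((j:ℝ)*δ*L), Real.exp_nonneg ((m:ℝ)*δ*L),
              mul_le_mul_of_nonneg_left this (mul_nonneg (mul_nonneg (Nat.cast_nonneg m) hδ) hL)]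
    have hsecond : ‖δ • (Q f - Q ((estep Q δ)^[j] f))‖ ≤ (m:ℝ) * δ^2 * L^2 * Real.exp (m * δ * L) * ‖f‖ := by
      rw [norm_smul δ (Q f - Q ((estep Q δ)^[j] f)), Real.norm_of_nonneg hδ]
      calc δ * ‖Q f - Q ((estep Q δ)^[j] f)‖ ≤ δ * (L * ‖f - (estep Q δ)^[j] f‖) := by
            gcongr
            exact hlip _ _
        _ ≤ δ * (L * ((m : ℝ) * δ * L * Real.exp (m * δ * L) * ‖f‖)) := by gcongr
        _ = (m:ℝ) * δ^2 * L^2 * Real.exp (m * δ * L) * ‖f‖ := by ring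
    calc ‖f + (((j:ℝ)+1) * δ) • Q f - estep Q δ ((estep Q δ)^[j] f)‖
        ≤ ‖f + ((j:ℝ) * δ) • Q f - (estep Q δ)^[j] f‖ + ‖δ • (Q f - Q ((estep Q δ)^[j] f))‖ := by
          rw [hsplit]; exact norm_add_le _ _
      _ ≤ (j : ℝ) * m * δ^2 * L^2 * Real.exp (m * δ * L) * ‖f‖
          + (m:ℝ) * δ^2 * L^2 * Real.exp (m * δ * L) * ‖f‖ := by gcongr
      _ = ((j:ℝ)+1) * m * δ^2 * L^2 * Real.exp (m * δ * L) * ‖f‖ := by push_cast; ring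

include hL hlip in
lemma euler_lip {t : ℝ} (ht : 0 ≤ t) (n : ℕ) (f g : BoundedContinuousFunction X ℝ) :
    ‖euler Q t n f - euler Q t n g‖ ≤ Real.exp (t * L) * ‖f - g‖ := by
  rw [euler_eq]
  rcases Nat.eq_zero_or_pos n with h0 | hpos
  · subst h0
    simp only [Function.iterate_zero, id_eq]
    nlinarith [Real.one_le_exp (mul_nonneg ht hL), norm_nonneg (f - g)]
  · have hn : (n : ℝ) ≠ 0 := by positivity
    have : (n : ℝ) * (t / n) = t := by field_simp
    calc ‖(estep Q (t/n))^[n] f - (estep Q (t/n))^[n] g‖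
        ≤ Real.exp ((n : ℝ) * (t / n) * L) * ‖f - g‖ :=
          iter_lip Q hL hlip (by positivity) f g n
      _ = Real.exp (t * L) * ‖f - g‖ := by rw [this]

include hQ0 in
lemma euler_zero (t : ℝ) (n : ℕ) : euler Q t n 0 = 0 := by
  rw [euler_eq]; exact iter_zero Q hQ0 _ n

include hL hlip hQ0 in
lemma euler_taylor' {u : ℝ} (hu : 0 ≤ u) {n : ℕ} (hn : 1 ≤ n) (g : BoundedContinuousFunction X ℝ) :
    ‖g + u • Q g - euler Q u n g‖ ≤ u^2 * L^2 * Real.exp (u * L) * ‖g‖ := by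
  rw [euler_eq]
  have hnR : (n : ℝ) ≠ 0 := by positivity
  have h1 : (n : ℝ) * (u / n) = u := by field_simp
  have h2 := euler_taylor Q hL hlip hQ0 (δ := u / n) (by positivity) g n n le_rfl
  rw [h1] at h2
  calc ‖g + u • Q g - (estep Q (u/n))^[n] g‖
      ≤ (n:ℝ) * n * (u/n)^2 * L^2 * Real.exp (u * L) * ‖g‖ := h2
    _ = u^2 * L^2 * Real.exp (u * L) * ‖g‖ := by field_simp

include hL hlip hQ0 in
lemma diff_steps {δ δ' : ℝ} (hδ : 0 ≤ δ) (hδ' : 0 ≤ δ') (f : BoundedContinuousFunction X ℝ) (n : ℕ) :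
    ‖(estep Q δ)^[n] f - (estep Q δ')^[n] f‖
      ≤ n * |δ - δ'| * L * Real.exp (n * (max δ δ') * L) * ‖f‖ := by
  set M := max δ δ' with hM
  have hM0 : 0 ≤ M := le_trans hδ (le_max_left _ _)
  induction n with
  | zero => simp
  | succ n ih =>
    rw [Function.iterate_succ_apply', Function.iterate_succ_apply']
    push_cast
    set x := (estep Q δ)^[n] f
    set y := (estep Q δ')^[n] f
    have hfirst : ‖estep Q δ x - estep Q δ' x‖ ≤ |δ - δ'| * (L * (Real.exp (n * M * L) * ‖f‖)) := by
      have he : estep Q δ x - estep Q δ' x = (δ - δ') • Q x := by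
        simp only [estep]
        rw [sub_smul δ δ' (Q x)]
        abel
      rw [he, norm_smul (δ - δ') (Q x), Real.norm_eq_abs]
      gcongr
      calc ‖Q x‖ ≤ L * ‖x‖ := qnorm Q hlip hQ0 x
        _ ≤ L * (Real.exp ((n:ℝ) * δ * L) * ‖f‖) := by
            gcongr; exact iter_growth Q hL hlip hQ0 hδ f n
        _ ≤ L * (Real.exp ((n:ℝ) * M * L) * ‖f‖) := by
            gcongr
            exact le_max_left _ _
    have hsecond : ‖estep Q δ' x - estep Q δ' y‖
        ≤ Real.exp (M * L) * ((n:ℝ) * |δ - δ'| * L * Real.exp (n * M * L) * ‖f‖) := by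
      calc ‖estep Q δ' x - estep Q δ' y‖ ≤ Real.exp (δ' * L) * ‖x - y‖ :=
            estep_lip Q hL hlip hδ' x y
        _ ≤ Real.exp (M * L) * ((n:ℝ) * |δ - δ'| * L * Real.exp (n * M * L) * ‖f‖) := by
            gcongr <;> first | exact le_max_right _ _ | exact ih | positivity
    have hexp : Real.exp ((n:ℝ) * M * L) ≤ Real.exp (((n:ℝ)+1) * M * L) := by
      apply Real.exp_le_exp.mpr
      nlinarith [Nat.cast_nonneg (α := ℝ) n]
    calc ‖estep Q δ x - estep Q δ' y‖ ≤ ‖estep Q δ x - estep Q δ' x‖ + ‖estep Q δ' x - estep Q δ' y‖ :=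
          norm_sub_le_norm_sub_add_norm_sub _ _ _
      _ ≤ |δ - δ'| * (L * (Real.exp (n * M * L) * ‖f‖))
          + Real.exp (M * L) * ((n:ℝ) * |δ - δ'| * L * Real.exp (n * M * L) * ‖f‖) := by
          gcongr
      _ = |δ - δ'| * L * ‖f‖ * Real.exp (n * M * L)
          + (n:ℝ) * |δ - δ'| * L * ‖f‖ * (Real.exp (M * L) * Real.exp (n * M * L)) := by ring
      _ ≤ |δ - δ'| * L * ‖f‖ * Real.exp (((n:ℝ)+1) * M * L)
          + (n:ℝ) * |δ - δ'| * L * ‖f‖ * Real.exp (((n:ℝ)+1) * M * L) := by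
          rw [← Real.exp_add]
          have heq : M * L + (n:ℝ) * M * L = ((n:ℝ)+1) * M * L := by ring
          rw [heq]
          gcongr <;> positivity
      _ = ((n:ℝ)+1) * |δ - δ'| * L * Real.exp (((n:ℝ)+1) * M * L) * ‖f‖ := by ring

include hL hlip hQ0 in
lemma euler_time_lip {s t : ℝ} (hs : 0 ≤ s) (ht : 0 ≤ t) (n : ℕ) (f : BoundedContinuousFunction X ℝ) :
    ‖euler Q s n f - euler Q t n f‖ ≤ |s - t| * L * Real.exp ((max s t) * L) * ‖f‖ := by
  rcases Nat.eq_zero_or_pos n with h0 | hpos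
  · subst h0
    simp only [euler, Function.iterate_zero, id_eq, sub_self, norm_zero]
    positivity
  · have hnR : (0:ℝ) < n := by exact_mod_cast hpos
    have h1 : (n:ℝ) * |s/n - t/n| = |s - t| := by
      rw [div_sub_div_same, abs_div, abs_of_pos hnR]
      field_simp
    have h2 : (n:ℝ) * (max (s/n) (t/n)) = max s t := by
      rw [max_div_div_right (le_of_lt hnR) s t]
      field_simp
    have h3 := diff_steps Q hL hlip hQ0 (δ := s/n) (δ' := t/n) (by positivity) (by positivity) f n
    rw [euler_eq, euler_eq]
    calc ‖(estep Q (s/n))^[n] f - (estep Q (t/n))^[n] f‖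
        ≤ (n:ℝ) * |s/n - t/n| * L * Real.exp ((n:ℝ) * (max (s/n) (t/n)) * L) * ‖f‖ := by
          have := h3
          convert this using 3 <;> ring
      _ = |s - t| * L * Real.exp ((max s t) * L) * ‖f‖ := by rw [h1, h2]


end EulerEst

section OpNorm
variable {X : Type*} [TopologicalSpace X]

lemma opSemiNorm_apply_le (A : Op X) (f : BoundedContinuousFunction X ℝ) (hf : f ≠ 0) :
    (‖A f‖₊ : ℝ≥0∞) ≤ opSemiNorm A * ‖f‖₊ := by
  have h : (‖A f‖₊ : ℝ≥0∞) / ‖f‖₊ ≤ opSemiNorm A :=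
    le_iSup₂ (f := fun (g : BoundedContinuousFunction X ℝ) (_ : g ≠ 0) => (‖A g‖₊ : ℝ≥0∞) / ‖g‖₊) f hf
  have hf0 : (‖f‖₊ : ℝ≥0∞) ≠ 0 := by simpa [nnnorm_eq_zero] using hf
  rwa [ENNReal.div_le_iff hf0 ENNReal.coe_ne_top] at h

lemma norm_apply_le_opDist (A B : Op X) (f : BoundedContinuousFunction X ℝ) :
    (‖A f - B f‖₊ : ℝ≥0∞) ≤ opDist A B * (1 + ‖f‖₊) := by
  rcases eq_or_ne f 0 with rfl | hf
  · have h1 : (‖A 0 - B 0‖₊ : ℝ≥0∞) ≤ opDist A B := by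
      rw [opDist]; exact le_self_add
    have h2 : opDist A B ≤ opDist A B * (1 + ‖(0 : BoundedContinuousFunction X ℝ)‖₊) := by
      apply le_mul_of_one_le_right' ; simp
    exact le_trans h1 h2
  · have h1 : (‖(A - B) f‖₊ : ℝ≥0∞) ≤ opSemiNorm (A - B) * ‖f‖₊ :=
      opSemiNorm_apply_le (A - B) f hf
    have h2 : (A - B) f = A f - B f := rfl
    rw [h2] at h1
    calc (‖A f - B f‖₊ : ℝ≥0∞) ≤ opSemiNorm (A - B) * ‖f‖₊ := h1
      _ ≤ opDist A B * (1 + ‖f‖₊) := by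
          apply mul_le_mul'
          · rw [opDist]; exact le_add_self
          · exact le_add_self

lemma opSemiNorm_le_ofReal (A : Op X) {c : ℝ}
    (h : ∀ f, ‖A f‖ ≤ c * ‖f‖) : opSemiNorm A ≤ ENNReal.ofReal c := by
  refine iSup₂_le fun f hf => ?_
  have hf0 : (‖f‖₊ : ℝ≥0∞) ≠ 0 := by simpa [nnnorm_eq_zero] using hf
  rw [ENNReal.div_le_iff hf0 ENNReal.coe_ne_top]
  rw [ENNReal.ofReal, ← ENNReal.coe_mul, ENNReal.coe_le_coe, ← NNReal.coe_le_coe]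
  push_cast
  calc ‖A f‖ ≤ c * ‖f‖ := h f
    _ ≤ c.toNNReal * ‖f‖ := by gcongr; exact Real.le_coe_toNNReal c

end OpNorm

section Elim
variable {X : Type*} [TopologicalSpace X]
variable (Q : Op X) {L : ℝ} (hL : 0 ≤ L)
  (hlip : ∀ f g : BoundedContinuousFunction X ℝ, ‖Q f - Q g‖ ≤ L * ‖f - g‖)
  (hQ0 : Q 0 = 0)
  (E : ℝ → Op X)
  (hE : ∀ t : ℝ, 0 ≤ t → Tendsto (fun n => opDist (euler Q t n) (E t)) atTop (nhds 0))

include hE in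
lemma ptconv {t : ℝ} (ht : 0 ≤ t) (f : BoundedContinuousFunction X ℝ) :
    Tendsto (fun n => ‖euler Q t n f - E t f‖) atTop (𝓝 0) := by
  have hb : ∀ n, (‖euler Q t n f - E t f‖₊ : ℝ≥0∞) ≤ opDist (euler Q t n) (E t) * (1 + ‖f‖₊) :=
    fun n => norm_apply_le_opDist _ _ f
  have hne : ((1 : ℝ≥0∞) + ‖f‖₊) ≠ ⊤ := by
    simp [ENNReal.add_ne_top]
  have hmul : Tendsto (fun n => opDist (euler Q t n) (E t) * (1 + ‖f‖₊)) atTop (𝓝 0) := by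
    have := ENNReal.Tendsto.mul_const (hE t ht) (Or.inr hne)
    simpa using this
  have hEN : Tendsto (fun n => (‖euler Q t n f - E t f‖₊ : ℝ≥0∞)) atTop (𝓝 0) :=
    tendsto_of_tendsto_of_tendsto_of_le_of_le tendsto_const_nhds hmul
      (fun n => zero_le) hb
  rw [← ENNReal.coe_zero, ENNReal.tendsto_coe] at hEN
  have : Tendsto (fun n => ((‖euler Q t n f - E t f‖₊ : ℝ≥0) : ℝ)) atTop (𝓝 ((0 : ℝ≥0) : ℝ)) :=
    NNReal.tendsto_coe.mpr hEN
  simpa using this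

include hQ0 hE in
lemma E_zero {t : ℝ} (ht : 0 ≤ t) : E t 0 = 0 := by
  have h := ptconv Q E hE ht 0
  have heq : ∀ n : ℕ, ‖euler Q t n 0 - E t 0‖ = ‖E t 0‖ := by
    intro n
    rw [euler_zero Q hQ0, zero_sub, norm_neg]
  rw [tendsto_congr heq] at h
  have := tendsto_nhds_unique h tendsto_const_nhds
  simpa [norm_eq_zero] using this.symm

include hL hlip hE in
lemma E_lip {t : ℝ} (ht : 0 ≤ t) (f g : BoundedContinuousFunction X ℝ) :
    ‖E t f - E t g‖ ≤ Real.exp (t * L) * ‖f - g‖ := by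
  have hconv : Tendsto (fun n => ‖E t f - euler Q t n f‖ + Real.exp (t * L) * ‖f - g‖
      + ‖euler Q t n g - E t g‖) atTop (𝓝 (0 + Real.exp (t * L) * ‖f - g‖ + 0)) := by
    apply Tendsto.add
    · apply Tendsto.add
      · have := ptconv Q E hE ht f
        simpa [norm_sub_rev] using this
      · exact tendsto_const_nhds
    · exact ptconv Q E hE ht g
  rw [zero_add, add_zero] at hconv
  refine ge_of_tendsto' hconv fun n => ?_
  calc ‖E t f - E t g‖
      ≤ ‖E t f - euler Q t n f‖ + ‖euler Q t n f - euler Q t n g‖ + ‖euler Q t n g - E t g‖ := by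
        have h1 := norm_sub_le_norm_sub_add_norm_sub (E t f) (euler Q t n g) (E t g)
        have h2 := norm_sub_le_norm_sub_add_norm_sub (E t f) (euler Q t n f) (euler Q t n g)
        linarith
    _ ≤ ‖E t f - euler Q t n f‖ + Real.exp (t * L) * ‖f - g‖ + ‖euler Q t n g - E t g‖ := by
        gcongr
        exact euler_lip Q hL hlip ht n f g

include hL hlip hQ0 hE in
lemma E_growth {t : ℝ} (ht : 0 ≤ t) (f : BoundedContinuousFunction X ℝ) :
    ‖E t f‖ ≤ Real.exp (t * L) * ‖f‖ := by
  have := E_lip Q hL hlip E hE ht f 0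
  rwa [E_zero Q hQ0 E hE ht, sub_zero, sub_zero] at this

include hL hlip hQ0 hE in
lemma E_time_lip {s t : ℝ} (hs : 0 ≤ s) (ht : 0 ≤ t) (f : BoundedContinuousFunction X ℝ) :
    ‖E s f - E t f‖ ≤ |s - t| * L * Real.exp ((max s t) * L) * ‖f‖ := by
  have hconv : Tendsto (fun n => ‖E s f - euler Q s n f‖
      + |s - t| * L * Real.exp ((max s t) * L) * ‖f‖
      + ‖euler Q t n f - E t f‖) atTop
      (𝓝 (0 + |s - t| * L * Real.exp ((max s t) * L) * ‖f‖ + 0)) := by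
    apply Tendsto.add
    · apply Tendsto.add
      · have := ptconv Q E hE hs f
        simpa [norm_sub_rev] using this
      · exact tendsto_const_nhds
    · exact ptconv Q E hE ht f
  rw [zero_add, add_zero] at hconv
  refine ge_of_tendsto' hconv fun n => ?_
  calc ‖E s f - E t f‖
      ≤ ‖E s f - euler Q s n f‖ + ‖euler Q s n f - euler Q t n f‖ + ‖euler Q t n f - E t f‖ := by
        have h1 := norm_sub_le_norm_sub_add_norm_sub (E s f) (euler Q t n f) (E t f)
        have h2 := norm_sub_le_norm_sub_add_norm_sub (E s f) (euler Q s n f) (euler Q t n f)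
        linarith
    _ ≤ ‖E s f - euler Q s n f‖ + |s - t| * L * Real.exp ((max s t) * L) * ‖f‖
        + ‖euler Q t n f - E t f‖ := by
        gcongr
        exact euler_time_lip Q hL hlip hQ0 hs ht n f

include hE in
lemma E_id (f : BoundedContinuousFunction X ℝ) : E 0 f = f := by
  have h := ptconv Q E hE le_rfl f
  have heq : ∀ n : ℕ, ‖euler Q 0 n f - E 0 f‖ = ‖f - E 0 f‖ := by
    intro n
    have : euler Q 0 n f = f := by
      rw [euler_eq]
      apply Function.iterate_fixed
      simp [estep]
    rw [this]
  rw [tendsto_congr heq] at h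
  have := tendsto_nhds_unique h tendsto_const_nhds
  have h3 : ‖f - E 0 f‖ = 0 := this.symm
  have h2 : f - E 0 f = 0 := norm_eq_zero.mp h3
  have := sub_eq_zero.mp h2
  exact this.symm

include hL hlip hQ0 hE in
lemma E_taylor {u : ℝ} (hu : 0 ≤ u) (g : BoundedContinuousFunction X ℝ) :
    ‖E u g - (g + u • Q g)‖ ≤ u^2 * L^2 * Real.exp (u * L) * ‖g‖ := by
  have hconv : Tendsto (fun n => ‖E u g - euler Q u n g‖ + u^2 * L^2 * Real.exp (u * L) * ‖g‖)
      atTop (𝓝 (0 + u^2 * L^2 * Real.exp (u * L) * ‖g‖)) := by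
    apply Tendsto.add
    · have := ptconv Q E hE hu g
      simpa [norm_sub_rev] using this
    · exact tendsto_const_nhds
  rw [zero_add] at hconv
  apply ge_of_tendsto hconv
  filter_upwards [eventually_ge_atTop 1] with n hn
  calc ‖E u g - (g + u • Q g)‖
      ≤ ‖E u g - euler Q u n g‖ + ‖euler Q u n g - (g + u • Q g)‖ :=
        norm_sub_le_norm_sub_add_norm_sub _ _ _
    _ ≤ ‖E u g - euler Q u n g‖ + u^2 * L^2 * Real.exp (u * L) * ‖g‖ := by
        gcongr
        rw [norm_sub_rev]
        exact euler_taylor' Q hL hlip hQ0 hu hn g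

end Elim

section Semigroup
variable {X : Type*} [TopologicalSpace X]
variable (Q : Op X) {L : ℝ} (hL : 0 ≤ L)
  (hlip : ∀ f g : BoundedContinuousFunction X ℝ, ‖Q f - Q g‖ ≤ L * ‖f - g‖)
  (hQ0 : Q 0 = 0)
  (E : ℝ → Op X)
  (hE : ∀ t : ℝ, 0 ≤ t → Tendsto (fun n => opDist (euler Q t n) (E t)) atTop (nhds 0))

lemma euler_split (p r q k : ℕ) (hq : 1 ≤ q) (hk : 1 ≤ k) (hp : 1 ≤ p) (hr : 1 ≤ r)
    (f : BoundedContinuousFunction X ℝ) :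
    euler Q (((p:ℝ)+r)/q) ((p+r)*k) f = euler Q ((r:ℝ)/q) (r*k) (euler Q ((p:ℝ)/q) (p*k) f) := by
  have hqR : (0:ℝ) < q := by exact_mod_cast hq
  have hkR : (0:ℝ) < k := by exact_mod_cast hk
  have hpR : (0:ℝ) < p := by exact_mod_cast hp
  have hrR : (0:ℝ) < r := by exact_mod_cast hr
  have a1 : (((p:ℝ)+r)/q) / ((((p+r)*k : ℕ)) : ℝ) = 1 / ((q:ℝ)*k) := by
    push_cast
    rw [div_div]
    rw [div_eq_div_iff (by positivity) (by positivity)]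
    ring
  have a2 : ((r:ℝ)/q) / (((r*k : ℕ)) : ℝ) = 1 / ((q:ℝ)*k) := by
    push_cast
    rw [div_div]
    rw [div_eq_div_iff (by positivity) (by positivity)]
    ring
  have a3 : ((p:ℝ)/q) / (((p*k : ℕ)) : ℝ) = 1 / ((q:ℝ)*k) := by
    push_cast
    rw [div_div]
    rw [div_eq_div_iff (by positivity) (by positivity)]
    ring
  rw [euler_eq, euler_eq, euler_eq, a1, a2, a3]
  have hnn : (p+r)*k = r*k + p*k := by ring
  rw [hnn, Function.iterate_add_apply]

include hL hlip hQ0 hE in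
lemma E_sg_rat (p r q : ℕ) (hq : 1 ≤ q) (hp : 1 ≤ p) (hr : 1 ≤ r)
    (f : BoundedContinuousFunction X ℝ) :
    E (((p:ℝ)/q) + ((r:ℝ)/q)) f = E ((r:ℝ)/q) (E ((p:ℝ)/q) f) := by
  have hqR : (0:ℝ) < q := by exact_mod_cast hq
  set t : ℝ := (p:ℝ)/q with htdef
  set h : ℝ := (r:ℝ)/q with hhdef
  have ht : 0 ≤ t := by positivity
  have hh : 0 ≤ h := by positivity
  have hth : 0 ≤ t + h := by positivity
  have hmul : Tendsto (fun k : ℕ => (p+r)*k) atTop atTop := by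
    apply tendsto_atTop_mono (fun k => Nat.le_mul_of_pos_left k (by omega))
    exact tendsto_id
  have hsum : t + h = ((p:ℝ)+r)/q := by rw [htdef, hhdef, ← add_div]
  -- sequence 1 : full euler along subsequence tends to E (t+h) f
  have seq1 : Tendsto (fun k : ℕ => ‖euler Q (t+h) ((p+r)*k) f - E (t+h) f‖) atTop (𝓝 0) :=
    (ptconv Q E hE hth f).comp hmul
  -- sequence 2
  have hmulp : Tendsto (fun k : ℕ => p*k) atTop atTop := by
    apply tendsto_atTop_mono (fun k => Nat.le_mul_of_pos_left k (by omega))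
    exact tendsto_id
  have seq2 : Tendsto (fun k : ℕ => ‖euler Q h (r*k) (euler Q t (p*k) f) - E h (E t f)‖)
      atTop (𝓝 0) := by
    have hbnd : ∀ k : ℕ, ‖euler Q h (r*k) (euler Q t (p*k) f) - E h (E t f)‖
        ≤ Real.exp (h*L) * ‖euler Q t (p*k) f - E t f‖
          + ‖euler Q h (r*k) (E t f) - E h (E t f)‖ := by
      intro k
      calc ‖euler Q h (r*k) (euler Q t (p*k) f) - E h (E t f)‖
          ≤ ‖euler Q h (r*k) (euler Q t (p*k) f) - euler Q h (r*k) (E t f)‖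
            + ‖euler Q h (r*k) (E t f) - E h (E t f)‖ :=
            norm_sub_le_norm_sub_add_norm_sub _ _ _
        _ ≤ Real.exp (h*L) * ‖euler Q t (p*k) f - E t f‖
            + ‖euler Q h (r*k) (E t f) - E h (E t f)‖ := by
            gcongr
            exact euler_lip Q hL hlip hh _ _ _
    have hlim : Tendsto (fun k : ℕ => Real.exp (h*L) * ‖euler Q t (p*k) f - E t f‖
        + ‖euler Q h (r*k) (E t f) - E h (E t f)‖) atTop (𝓝 (Real.exp (h*L) * 0 + 0)) := by
      apply Tendsto.add
      · exact (tendsto_const_nhds.mul ((ptconv Q E hE ht f).comp hmulp))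
      · have hmulr : Tendsto (fun k : ℕ => r*k) atTop atTop := by
          apply tendsto_atTop_mono (fun k => Nat.le_mul_of_pos_left k (by omega))
          exact tendsto_id
        exact (ptconv Q E hE hh (E t f)).comp hmulr
    rw [mul_zero, zero_add] at hlim
    exact squeeze_zero (fun k => norm_nonneg _) hbnd hlim
  -- combine
  have key : ‖E (t+h) f - E h (E t f)‖ = 0 := by
    have hconv : Tendsto (fun k : ℕ => ‖euler Q (t+h) ((p+r)*k) f - E (t+h) f‖
        + ‖euler Q h (r*k) (euler Q t (p*k) f) - E h (E t f)‖) atTop (𝓝 (0 + 0)) :=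
      seq1.add seq2
    rw [add_zero] at hconv
    have hle : ∀ᶠ k : ℕ in atTop, ‖E (t+h) f - E h (E t f)‖
        ≤ ‖euler Q (t+h) ((p+r)*k) f - E (t+h) f‖
          + ‖euler Q h (r*k) (euler Q t (p*k) f) - E h (E t f)‖ := by
      filter_upwards [eventually_ge_atTop 1] with k hk
      have hsplit : euler Q (t+h) ((p+r)*k) f = euler Q h (r*k) (euler Q t (p*k) f) := by
        rw [hsum, htdef, hhdef]
        exact euler_split Q p r q k hq hk hp hr f
      calc ‖E (t+h) f - E h (E t f)‖
          ≤ ‖E (t+h) f - euler Q (t+h) ((p+r)*k) f‖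
            + ‖euler Q (t+h) ((p+r)*k) f - E h (E t f)‖ :=
            norm_sub_le_norm_sub_add_norm_sub _ _ _
        _ = ‖euler Q (t+h) ((p+r)*k) f - E (t+h) f‖
            + ‖euler Q h (r*k) (euler Q t (p*k) f) - E h (E t f)‖ := by
            rw [norm_sub_rev, hsplit]
    have h1 : ‖E (t+h) f - E h (E t f)‖ ≤ 0 := ge_of_tendsto hconv hle
    exact le_antisymm h1 (norm_nonneg _)
  have := sub_eq_zero.mp (norm_eq_zero.mp key)
  exact this

include hL hlip hQ0 hE in
set_option maxHeartbeats 1000000 in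
lemma E_sg {t h : ℝ} (ht : 0 ≤ t) (hh : 0 ≤ h) (f : BoundedContinuousFunction X ℝ) :
    E (t + h) f = E h (E t f) := by
  set C0 : ℝ := 2*L*Real.exp ((t+h+2)*L)*‖f‖ + L*Real.exp ((h+1)*L)*(Real.exp ((t+1)*L)*‖f‖)
      + L*Real.exp ((h+1)*L)*(Real.exp (t*L)*‖f‖) with hC0
  have hC0nn : 0 ≤ C0 := by positivity
  have key : ∀ q : ℕ, 1 ≤ q → ‖E (t+h) f - E h (E t f)‖ ≤ (1/(q:ℝ)) * C0 := by
    intro q hq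
    have hqR : (0:ℝ) < q := by exact_mod_cast hq
    set p : ℕ := ⌊t*q⌋₊ + 1 with hpdef
    set r : ℕ := ⌊h*q⌋₊ + 1 with hrdef
    have hp : 1 ≤ p := Nat.le_add_left 1 _
    have hr : 1 ≤ r := Nat.le_add_left 1 _
    set t' : ℝ := (p:ℝ)/q with ht'def
    set h' : ℝ := (r:ℝ)/q with hh'def
    have htq : 0 ≤ t*q := by positivity
    have hhq : 0 ≤ h*q := by positivity
    have hplo : t*q < (p:ℝ) := by
      rw [hpdef]; push_cast; exact Nat.lt_floor_add_one _
    have hphi : (p:ℝ) ≤ t*q + 1 := by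
      rw [hpdef]; push_cast
      have := Nat.floor_le htq
      linarith
    have hrlo : h*q < (r:ℝ) := by
      rw [hrdef]; push_cast; exact Nat.lt_floor_add_one _
    have hrhi : (r:ℝ) ≤ h*q + 1 := by
      rw [hrdef]; push_cast
      have := Nat.floor_le hhq
      linarith
    have ht'lo : t < t' := by
      rw [ht'def, lt_div_iff₀ hqR]; linarith
    have ht'hi : t' ≤ t + 1/q := by
      rw [ht'def, div_le_iff₀ hqR]
      have : (t + 1/q)*q = t*q + 1 := by field_simp
      rw [this]; exact hphi
    have hh'lo : h < h' := by
      rw [hh'def, lt_div_iff₀ hqR]; linarith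
    have hh'hi : h' ≤ h + 1/q := by
      rw [hh'def, div_le_iff₀ hqR]
      have : (h + 1/q)*q = h*q + 1 := by field_simp
      rw [this]; exact hrhi
    have hq1 : 1/(q:ℝ) ≤ 1 := by
      rw [div_le_one hqR]; exact_mod_cast hq
    have ht'0 : 0 ≤ t' := le_trans ht (le_of_lt ht'lo)
    have hh'0 : 0 ≤ h' := le_trans hh (le_of_lt hh'lo)
    have hsg : E (t' + h') f = E h' (E t' f) := by
      rw [ht'def, hh'def]
      exact E_sg_rat Q hL hlip hQ0 E hE p r q hq hp hr f
    -- term 1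
    have hterm1 : ‖E (t+h) f - E (t'+h') f‖ ≤ (1/(q:ℝ)) * (2*L*Real.exp ((t+h+2)*L)*‖f‖) := by
      calc ‖E (t+h) f - E (t'+h') f‖
          ≤ |(t+h) - (t'+h')| * L * Real.exp ((max (t+h) (t'+h')) * L) * ‖f‖ :=
            E_time_lip Q hL hlip hQ0 E hE (by positivity) (by positivity) f
        _ ≤ (2*(1/q)) * L * Real.exp ((t+h+2)*L) * ‖f‖ := by
            gcongr <;> first
              | (rw [abs_le]; constructor <;> linarith)
              | (apply max_le <;> linarith)
              | linarith
              | positivity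
              | exact E_growth Q hL hlip hQ0 E hE ht f
        _ = (1/(q:ℝ)) * (2*L*Real.exp ((t+h+2)*L)*‖f‖) := by ring
    -- term 2a
    have hterm2a : ‖E h' (E t' f) - E h' (E t f)‖
        ≤ (1/(q:ℝ)) * (L*Real.exp ((h+1)*L)*(Real.exp ((t+1)*L)*‖f‖)) := by
      calc ‖E h' (E t' f) - E h' (E t f)‖
          ≤ Real.exp (h' * L) * ‖E t' f - E t f‖ := E_lip Q hL hlip E hE hh'0 _ _
        _ ≤ Real.exp (h' * L) * (|t' - t| * L * Real.exp ((max t' t) * L) * ‖f‖) := by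
            gcongr
            exact E_time_lip Q hL hlip hQ0 E hE ht'0 ht f
        _ ≤ Real.exp ((h+1) * L) * ((1/q) * L * Real.exp ((t+1) * L) * ‖f‖) := by
            gcongr <;> first
              | (rw [abs_le]; constructor <;> linarith)
              | (apply max_le <;> linarith)
              | linarith
              | positivity
              | exact E_growth Q hL hlip hQ0 E hE ht f
        _ = (1/(q:ℝ)) * (L*Real.exp ((h+1)*L)*(Real.exp ((t+1)*L)*‖f‖)) := by ring
    -- term 2b
    have hterm2b : ‖E h' (E t f) - E h (E t f)‖
        ≤ (1/(q:ℝ)) * (L*Real.exp ((h+1)*L)*(Real.exp (t*L)*‖f‖)) := by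
      calc ‖E h' (E t f) - E h (E t f)‖
          ≤ |h' - h| * L * Real.exp ((max h' h) * L) * ‖E t f‖ :=
            E_time_lip Q hL hlip hQ0 E hE hh'0 hh (E t f)
        _ ≤ (1/q) * L * Real.exp ((h+1) * L) * (Real.exp (t*L) * ‖f‖) := by
            gcongr <;> first
              | (rw [abs_le]; constructor <;> linarith)
              | (apply max_le <;> linarith)
              | linarith
              | positivity
              | exact E_growth Q hL hlip hQ0 E hE ht f
        _ = (1/(q:ℝ)) * (L*Real.exp ((h+1)*L)*(Real.exp (t*L)*‖f‖)) := by ring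
    calc ‖E (t+h) f - E h (E t f)‖
        ≤ ‖E (t+h) f - E (t'+h') f‖ + ‖E (t'+h') f - E h (E t f)‖ :=
          norm_sub_le_norm_sub_add_norm_sub _ _ _
      _ ≤ ‖E (t+h) f - E (t'+h') f‖ + (‖E h' (E t' f) - E h' (E t f)‖
            + ‖E h' (E t f) - E h (E t f)‖) := by
          gcongr
          rw [hsg]
          exact norm_sub_le_norm_sub_add_norm_sub _ _ _
      _ ≤ (1/(q:ℝ)) * (2*L*Real.exp ((t+h+2)*L)*‖f‖)
            + ((1/(q:ℝ)) * (L*Real.exp ((h+1)*L)*(Real.exp ((t+1)*L)*‖f‖))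
            + (1/(q:ℝ)) * (L*Real.exp ((h+1)*L)*(Real.exp (t*L)*‖f‖))) := by
          gcongr
      _ = (1/(q:ℝ)) * C0 := by rw [hC0]; ring
  have hlim : Tendsto (fun q : ℕ => (1/(q:ℝ)) * C0) atTop (𝓝 (0 * C0)) :=
    tendsto_one_div_atTop_nhds_zero_nat.mul_const C0
  rw [zero_mul] at hlim
  have hD : ‖E (t+h) f - E h (E t f)‖ ≤ 0 := by
    apply ge_of_tendsto hlim
    filter_upwards [eventually_ge_atTop 1] with q hq
    exact key q hq
  exact sub_eq_zero.mp (norm_eq_zero.mp (le_antisymm hD (norm_nonneg _)))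


include hL hlip hQ0 hE in
lemma deriv_bound {t : ℝ} (ht : 0 ≤ t) {s : ℝ} (hs0 : 0 ≤ s) (hst : s ≠ t)
    (hs1 : |s - t| ≤ 1) (f : BoundedContinuousFunction X ℝ) :
    ‖((s - t)⁻¹ • (E s - E t) - Q ∘ E t) f‖
      ≤ (2*L^2*Real.exp ((t+2)*L) * |s - t|) * ‖f‖ := by
  have happ : ((s - t)⁻¹ • (E s - E t) - Q ∘ E t) f
      = (s - t)⁻¹ • (E s f - E t f) - Q (E t f) := by
    simp [Pi.sub_apply, Pi.smul_apply, Function.comp_apply]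
  rw [happ]
  rcases lt_or_gt_of_ne hst with hlt | hgt
  · -- s < t
    set u : ℝ := t - s with hudef
    have hu : 0 < u := by simp [hudef]; linarith
    have hu1 : u ≤ 1 := by
      have : |s - t| = u := by rw [abs_sub_comm, abs_of_pos hu]
      linarith
    set g : BoundedContinuousFunction X ℝ := E s f with hgdef
    have hEt : E t f = E u g := by
      have := E_sg Q hL hlip hQ0 E hE hs0 hu.le f
      rw [hgdef]
      rw [show s + u = t by ring] at this
      exact this
    have hts : t - s ≠ 0 := sub_ne_zero.mpr (ne_of_gt hlt)
    have hrw : (s - t)⁻¹ • (g - E t f) - Q (E t f)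
        = u⁻¹ • (E u g - (g + u • Q (E u g))) := by
      rw [hEt]
      match_scalars <;> (simp only [hudef]; field_simp) <;> ring
    rw [hrw]
    have hdrift : ‖E u g - g‖ ≤ u * L * Real.exp (u*L) * ‖g‖ := by
      have h0 := E_time_lip Q hL hlip hQ0 E hE hu.le le_rfl g
      rw [E_id Q E hE g] at h0
      simpa [abs_of_pos hu, max_eq_left hu.le] using h0
    have hmain : ‖E u g - (g + u • Q (E u g))‖ ≤ 2 * u^2 * L^2 * Real.exp (u*L) * ‖g‖ := by
      have hA : ‖E u g - (g + u • Q g)‖ ≤ u^2 * L^2 * Real.exp (u*L) * ‖g‖ :=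
        E_taylor Q hL hlip hQ0 E hE hu.le g
      have hsplit : E u g - (g + u • Q (E u g))
          = (E u g - (g + u • Q g)) + u • (Q g - Q (E u g)) := by
        rw [smul_sub]; abel
      have hB : ‖u • (Q g - Q (E u g))‖ ≤ u * (L * ‖g - E u g‖) := by
        rw [norm_smul u (Q g - Q (E u g)), Real.norm_of_nonneg hu.le]
        gcongr
        exact hlip g (E u g)
      have hC : ‖g - E u g‖ ≤ u * L * Real.exp (u*L) * ‖g‖ := by
        rw [norm_sub_rev]; exact hdrift
      calc ‖E u g - (g + u • Q (E u g))‖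
          ≤ ‖E u g - (g + u • Q g)‖ + ‖u • (Q g - Q (E u g))‖ := by
            rw [hsplit]; exact norm_add_le _ _
        _ ≤ u^2 * L^2 * Real.exp (u*L) * ‖g‖ + u * (L * (u * L * Real.exp (u*L) * ‖g‖)) := by
            gcongr
            calc ‖u • (Q g - Q (E u g))‖ ≤ u * (L * ‖g - E u g‖) := hB
              _ ≤ u * (L * (u * L * Real.exp (u*L) * ‖g‖)) := by gcongr
        _ = 2 * u^2 * L^2 * Real.exp (u*L) * ‖g‖ := by ring
    have hnorm : ‖u⁻¹ • (E u g - (g + u • Q (E u g)))‖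
        = u⁻¹ * ‖E u g - (g + u • Q (E u g))‖ := by
      rw [norm_smul u⁻¹ (E u g - (g + u • Q (E u g))), Real.norm_of_nonneg (by positivity)]
    have hgbd : ‖g‖ ≤ Real.exp (s*L) * ‖f‖ := E_growth Q hL hlip hQ0 E hE hs0 f
    have hexp : Real.exp (u*L) * Real.exp (s*L) ≤ Real.exp ((t+2)*L) := by
      rw [← Real.exp_add]
      apply Real.exp_le_exp.mpr
      nlinarith
    have habs : |s - t| = u := by rw [abs_sub_comm, abs_of_pos hu]
    rw [hnorm, habs]
    calc u⁻¹ * ‖E u g - (g + u • Q (E u g))‖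
        ≤ u⁻¹ * (2 * u^2 * L^2 * Real.exp (u*L) * ‖g‖) := by gcongr
      _ = 2 * u * L^2 * (Real.exp (u*L) * ‖g‖) := by field_simp
      _ ≤ 2 * u * L^2 * (Real.exp (u*L) * (Real.exp (s*L) * ‖f‖)) := by gcongr
      _ = 2 * u * L^2 * (Real.exp (u*L) * Real.exp (s*L)) * ‖f‖ := by ring
      _ ≤ 2 * u * L^2 * Real.exp ((t+2)*L) * ‖f‖ := by gcongr
      _ = (2*L^2*Real.exp ((t+2)*L) * u) * ‖f‖ := by ring
  · -- s > t
    set u : ℝ := s - t with hudef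
    have hu : 0 < u := by simp [hudef]; linarith
    have hu1 : u ≤ 1 := by
      have : |s - t| = u := abs_of_pos hu
      linarith
    set g : BoundedContinuousFunction X ℝ := E t f with hgdef
    have hEs : E s f = E u g := by
      have := E_sg Q hL hlip hQ0 E hE ht hu.le f
      rw [hgdef]
      rw [show t + u = s by ring] at this
      exact this
    have hrw : u⁻¹ • (E s f - g) - Q g
        = u⁻¹ • (E u g - (g + u • Q g)) := by
      rw [hEs]
      match_scalars <;> field_simp
    rw [hrw]
    have hnorm : ‖u⁻¹ • (E u g - (g + u • Q g))‖
        = u⁻¹ * ‖E u g - (g + u • Q g)‖ := by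
      rw [norm_smul u⁻¹ (E u g - (g + u • Q g)), Real.norm_of_nonneg (by positivity)]
    have hA : ‖E u g - (g + u • Q g)‖ ≤ u^2 * L^2 * Real.exp (u*L) * ‖g‖ :=
      E_taylor Q hL hlip hQ0 E hE hu.le g
    have hgbd : ‖g‖ ≤ Real.exp (t*L) * ‖f‖ := E_growth Q hL hlip hQ0 E hE ht f
    have hexp : Real.exp (u*L) * Real.exp (t*L) ≤ Real.exp ((t+2)*L) := by
      rw [← Real.exp_add]
      apply Real.exp_le_exp.mpr
      nlinarith
    have habs : |s - t| = u := abs_of_pos hu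
    rw [hnorm, habs]
    calc u⁻¹ * ‖E u g - (g + u • Q g)‖
        ≤ u⁻¹ * (u^2 * L^2 * Real.exp (u*L) * ‖g‖) := by gcongr
      _ = u * L^2 * (Real.exp (u*L) * ‖g‖) := by field_simp
      _ ≤ u * L^2 * (Real.exp (u*L) * (Real.exp (t*L) * ‖f‖)) := by gcongr
      _ = u * L^2 * (Real.exp (u*L) * Real.exp (t*L)) * ‖f‖ := by ring
      _ ≤ u * L^2 * Real.exp ((t+2)*L) * ‖f‖ := by gcongr
      _ ≤ (2*L^2*Real.exp ((t+2)*L) * u) * ‖f‖ := by nlinarith [norm_nonneg f, Real.exp_pos ((t+2)*L), sq_nonneg L, mul_nonneg (mul_nonneg hu.le (sq_nonneg L)) (mul_nonneg (Real.exp_nonneg ((t+2)*L)) (norm_nonneg f))]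


end Semigroup

theorem stmt_12 {X : Type*} [Countable X] [TopologicalSpace X] [DiscreteTopology X]
    (Q : Op X) (hQ : IsSublinearRate Q) (hQb : opSemiNorm Q ≠ ⊤)
    (E : ℝ → Op X)
    (hE : ∀ t : ℝ, 0 ≤ t → Tendsto (fun n => opDist (euler Q t n) (E t)) atTop (nhds 0)) :
    ∀ t : ℝ, 0 ≤ t →
      Tendsto (fun s => opSemiNorm ((s - t)⁻¹ • (E s - E t) - Q ∘ E t))
        (nhdsWithin t (Set.Ici 0 \ {t})) (nhds 0) := by
  -- extract the Lipschitz constant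
  set L : ℝ := ((opSemiNorm Q).toNNReal : ℝ) with hLdef
  have hL : 0 ≤ L := NNReal.coe_nonneg _
  have hQ0 : Q 0 = 0 := by
    have h := hQ.2.2.1 0
    have hc : BoundedContinuousFunction.const X (0:ℝ) = 0 := by ext x; simp
    rwa [hc] at h
  have hqn : ∀ f, ‖Q f‖ ≤ L * ‖f‖ := by
    intro f
    rcases eq_or_ne f 0 with rfl | hf
    · simp [hQ0]
    · have h1 := opSemiNorm_apply_le Q f hf
      rw [← ENNReal.coe_toNNReal hQb, ← ENNReal.coe_mul, ENNReal.coe_le_coe] at h1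
      have h2 := NNReal.coe_le_coe.mpr h1
      push_cast at h2
      simpa [hLdef, ENNReal.coe_toNNReal_eq_toReal] using h2
  have hlip : ∀ f g : BoundedContinuousFunction X ℝ, ‖Q f - Q g‖ ≤ L * ‖f - g‖ := by
    intro f g
    have key : ∀ u v : BoundedContinuousFunction X ℝ, ∀ x, Q u x - Q v x ≤ L * ‖u - v‖ := by
      intro u v x
      have hadd := hQ.2.1 v (u - v) x
      rw [show v + (u - v) = u by abel] at hadd
      have h2 : Q (u - v) x ≤ ‖Q (u - v)‖ := by
        have := BoundedContinuousFunction.norm_coe_le_norm (Q (u - v)) x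
        rw [Real.norm_eq_abs] at this
        exact le_trans (le_abs_self _) this
      have h3 : ‖Q (u - v)‖ ≤ L * ‖u - v‖ := hqn (u - v)
      linarith
    rw [BoundedContinuousFunction.norm_le (by positivity)]
    intro x
    rw [BoundedContinuousFunction.sub_apply, Real.norm_eq_abs, abs_le]
    constructor
    · have := key g f x
      rw [norm_sub_rev] at this
      linarith
    · exact key f g x
  intro t ht
  set C : ℝ := 2*L^2*Real.exp ((t+2)*L) with hCdef
  have hCpos : 0 ≤ C := by positivity
  have upper : ∀ᶠ s in nhdsWithin t (Set.Ici 0 \ {t}),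
      opSemiNorm ((s - t)⁻¹ • (E s - E t) - Q ∘ E t) ≤ ENNReal.ofReal (C * |s - t|) := by
    have hsmall : ∀ᶠ s in nhdsWithin t (Set.Ici 0 \ {t}), |s - t| ≤ 1 := by
      apply Filter.Eventually.filter_mono nhdsWithin_le_nhds
      have : ∀ᶠ s in 𝓝 t, |s - t| < 1 := by
        have := Metric.ball_mem_nhds t (by norm_num : (0:ℝ) < 1)
        filter_upwards [this] with s hs
        simpa [Real.dist_eq] using hs
      filter_upwards [this] with s hs using le_of_lt hs
    filter_upwards [hsmall, self_mem_nhdsWithin] with s hs1 hs2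
    obtain ⟨hs0, hst⟩ := hs2
    have hst' : s ≠ t := by simpa using hst
    apply opSemiNorm_le_ofReal
    intro f
    calc ‖((s - t)⁻¹ • (E s - E t) - Q ∘ E t) f‖
        ≤ (2*L^2*Real.exp ((t+2)*L) * |s - t|) * ‖f‖ :=
          deriv_bound Q hL hlip hQ0 E hE ht hs0 hst' hs1 f
      _ = (C * |s - t|) * ‖f‖ := by rw [hCdef]
  have hupper_tendsto : Tendsto (fun s => ENNReal.ofReal (C * |s - t|))
      (nhdsWithin t (Set.Ici 0 \ {t})) (𝓝 0) := by
    have h1 : Tendsto (fun s : ℝ => C * |s - t|) (𝓝 t) (𝓝 (C * |t - t|)) :=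
      (continuous_const.mul (continuous_id.sub continuous_const).abs).tendsto t
    have h2 : C * |t - t| = 0 := by simp
    rw [h2] at h1
    have h3 := h1.mono_left (nhdsWithin_le_nhds (s := Set.Ici 0 \ {t}))
    have h4 : Tendsto (fun s => ENNReal.ofReal (C * |s - t|))
        (nhdsWithin t (Set.Ici 0 \ {t})) (𝓝 (ENNReal.ofReal 0)) :=
      (ENNReal.continuous_ofReal.tendsto 0).comp h3
    simpa using h4
  apply tendsto_of_tendsto_of_tendsto_of_le_of_le' tendsto_const_nhds hupper_tendsto
  · exact Filter.Eventually.of_forall (fun s => zero_le)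
  · exact upper
end

section
/- A semigroup (T_t)_{t≥0} of sublinear transition operators on ℬ is uniformly continuous if and only if limsup_{t↘0} ‖(T_t − I)/t‖ < ∞, where ‖·‖ denotes the operator seminorm. -/
open Filter Topology BoundedContinuousFunction ENNReal NNReal

set_option linter.unusedSectionVars false
set_option linter.unusedVariables false

section Helpers
variable {X : Type*} [TopologicalSpace X] [DiscreteTopology X]

local notation "ℬ" => BoundedContinuousFunction X ℝ

lemma opSemiNorm_le {A : Op X} {C : ℝ≥0∞}
    (h : ∀ f : ℬ, (‖A f‖₊ : ℝ≥0∞) ≤ C * ‖f‖₊) : opSemiNorm A ≤ C :=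
  iSup₂_le fun f _ => ENNReal.div_le_of_le_mul (h f)

lemma le_opSemiNorm (A : Op X) (f : ℬ) (hf : f ≠ 0) :
    (‖A f‖₊ : ℝ≥0∞) / ‖f‖₊ ≤ opSemiNorm A :=
  le_iSup₂ (f := fun (g : ℬ) (_ : g ≠ 0) => (‖A g‖₊ : ℝ≥0∞) / (‖g‖₊ : ℝ≥0∞)) f hf

lemma nnnorm_le_opSemiNorm_mul (A : Op X) (h0 : A 0 = 0) (f : ℬ) :
    (‖A f‖₊ : ℝ≥0∞) ≤ opSemiNorm A * ‖f‖₊ := by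
  rcases eq_or_ne f 0 with rfl | hf
  · simp [h0]
  · have h1 := le_opSemiNorm A f hf
    have hne : (‖f‖₊ : ℝ≥0∞) ≠ 0 := by
      simpa [nnnorm_eq_zero] using hf
    exact (ENNReal.div_le_iff_le_mul (Or.inl hne) (Or.inl ENNReal.coe_ne_top)).mp h1

lemma norm_le_of_opSemiNorm_le {A : Op X} (h0 : A 0 = 0) {r : ℝ≥0}
    (h : opSemiNorm A ≤ (r : ℝ≥0∞)) (f : ℬ) : ‖A f‖ ≤ (r : ℝ) * ‖f‖ := by
  have h2 : (‖A f‖₊ : ℝ≥0∞) ≤ (r : ℝ≥0∞) * ‖f‖₊ :=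
    (nnnorm_le_opSemiNorm_mul A h0 f).trans (mul_le_mul_left h _)
  rw [← ENNReal.coe_mul, ENNReal.coe_le_coe] at h2
  exact_mod_cast h2

lemma opSemiNorm_le_of_norm_le {A : Op X} {r : ℝ} (hr : 0 ≤ r)
    (h : ∀ f : ℬ, ‖A f‖ ≤ r * ‖f‖) : opSemiNorm A ≤ ENNReal.ofReal r := by
  apply opSemiNorm_le
  intro f
  have h1 : ‖A f‖₊ ≤ r.toNNReal * ‖f‖₊ := by
    rw [← NNReal.coe_le_coe]
    push_cast
    rw [Real.coe_toNNReal r hr]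
    exact h f
  rw [ENNReal.ofReal]
  exact_mod_cast h1

lemma opSemiNorm_le_opSemiNorm {A B : Op X} (hB0 : B 0 = 0)
    (h : ∀ f : ℬ, ‖A f‖ ≤ ‖B f‖) : opSemiNorm A ≤ opSemiNorm B := by
  refine iSup₂_le fun f hf => le_trans ?_ (le_opSemiNorm B f hf)
  have : (‖A f‖₊ : ℝ≥0∞) ≤ (‖B f‖₊ : ℝ≥0∞) := by exact_mod_cast h f
  exact ENNReal.div_le_div_right this _

lemma opSemiNorm_smul_le (c : ℝ) (A : Op X) :
    opSemiNorm (c • A) ≤ (‖c‖₊ : ℝ≥0∞) * opSemiNorm A := by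
  refine iSup₂_le fun f hf => ?_
  have h1 : ((c • A) f : ℬ) = c • (A f) := rfl
  have h2 : ‖c • A f‖₊ = ‖c‖₊ * ‖A f‖₊ := NNReal.eq (by push_cast; exact norm_smul c (A f))
  rw [h1, h2, ENNReal.coe_mul, mul_div_assoc]
  exact mul_le_mul_right (le_opSemiNorm A f hf) _

end Helpers
section Sublinear
variable {X : Type*} [TopologicalSpace X] [DiscreteTopology X]

local notation "ℬ" => BoundedContinuousFunction X ℝ

lemma sl_zero {S : Op X} (hS : IsSublinearTransition S) : S 0 = 0 := by
  have h := hS.1 0 le_rfl 0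
  simpa using h

lemma sup_le_norm (f : ℬ) : (⨆ y, f y) ≤ ‖f‖ :=
  Real.iSup_le (fun y => (le_abs_self _).trans (f.norm_coe_le_norm y)) (norm_nonneg f)

lemma sl_sup_nonpos {f : ℬ} (h : ∀ y, f y ≤ 0) : (⨆ y, f y) ≤ 0 :=
  Real.iSup_le h le_rfl

lemma sl_mono {S : Op X} (hS : IsSublinearTransition S) {f g : ℬ}
    (h : ∀ y, f y ≤ g y) (x : X) : S f x ≤ S g x := by
  have hfg : g + (f - g) = f := by ext z; simp
  have h2 := hS.2.1 g (f - g) x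
  rw [hfg] at h2
  have h3 : S (f - g) x ≤ 0 :=
    (hS.2.2 (f - g) x).trans (sl_sup_nonpos (fun y => by simpa using sub_nonpos.2 (h y)))
  linarith

lemma sl_const [Nonempty X] {S : Op X} (hS : IsSublinearTransition S) (c : ℝ) :
    S (const X c) = const X c := by
  ext x
  have hup : ∀ d : ℝ, S (const X d) x ≤ d := fun d => by
    have := hS.2.2 (const X d) x
    simpa [ciSup_const] using this
  have hzero : (0 : ℬ) = const X c + const X (-c) := by ext z; simp
  have hlow := hS.2.1 (const X c) (const X (-c)) x
  rw [← hzero, sl_zero hS] at hlow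
  have h2 := hup (-c)
  have h3 := hup c
  simp only [BoundedContinuousFunction.coe_zero, Pi.zero_apply] at hlow
  simp only [BoundedContinuousFunction.const_apply]
  linarith

lemma sl_translate [Nonempty X] {S : Op X} (hS : IsSublinearTransition S) (f : ℬ) (c : ℝ)
    (x : X) : S (f + const X c) x = S f x + c := by
  have h1 := hS.2.1 f (const X c) x
  rw [sl_const hS c] at h1
  have h2 := hS.2.1 (f + const X c) (const X (-c)) x
  have he : (f + const X c) + const X (-c) = f := by ext z; simp
  rw [he, sl_const hS (-c)] at h2
  simp only [BoundedContinuousFunction.const_apply] at h1 h2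
  linarith

lemma sl_neg_le {S : Op X} (hS : IsSublinearTransition S) (f : ℬ) (x : X) :
    -S (-f) x ≤ S f x := by
  have h := hS.2.1 f (-f) x
  rw [add_neg_cancel, sl_zero hS] at h
  simp only [BoundedContinuousFunction.coe_zero, Pi.zero_apply] at h
  linarith

lemma sl_sub_le {S : Op X} (hS : IsSublinearTransition S) (f g : ℬ) (x : X) :
    S f x - S g x ≤ ‖f - g‖ := by
  have hfg : g + (f - g) = f := by ext z; simp
  have h2 := hS.2.1 g (f - g) x
  rw [hfg] at h2
  have h3 : S (f - g) x ≤ ‖f - g‖ := (hS.2.2 (f - g) x).trans (sup_le_norm _)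
  linarith

lemma sl_lip {S : Op X} (hS : IsSublinearTransition S) (f g : ℬ) (x : X) :
    |S f x - S g x| ≤ ‖f - g‖ := by
  rw [abs_le]
  constructor
  · have := sl_sub_le hS g f x
    rw [norm_sub_rev] at this
    linarith
  · exact sl_sub_le hS f g x

end Sublinear
section DD
variable {X : Type*} [TopologicalSpace X] [DiscreteTopology X]

local notation "ℬ" => BoundedContinuousFunction X ℝ

/-- `dd x = 1 - 1_x`. -/
noncomputable def dd (x : X) : ℬ := const X 1 - indic x

lemma indic_apply (x z : X) : indic x z = Set.indicator {x} (fun _ => (1:ℝ)) z := rfl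

lemma indic_apply_self (x : X) : indic x x = 1 := by
  rw [indic_apply]; simp

lemma indic_apply_ne {x y : X} (h : y ≠ x) : indic x y = 0 := by
  rw [indic_apply]; simp [Set.indicator_apply, h]

lemma dd_apply_self (x : X) : dd x x = 0 := by
  simp [dd, indic_apply_self]

lemma dd_apply_ne {x y : X} (h : y ≠ x) : dd x y = 1 := by
  simp [dd, indic_apply_ne h]

lemma dd_nonneg (x : X) (z : X) : 0 ≤ dd x z := by
  by_cases h : z = x
  · subst h; rw [dd_apply_self]
  · rw [dd_apply_ne h]; norm_num

lemma dd_le_one (x : X) (z : X) : dd x z ≤ 1 := by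
  by_cases h : z = x
  · subst h; rw [dd_apply_self]; norm_num
  · rw [dd_apply_ne h]

lemma dd_norm_le (x : X) : ‖dd x‖ ≤ 1 := by
  refine (BoundedContinuousFunction.norm_le zero_le_one).mpr fun z => ?_
  rw [Real.norm_eq_abs, abs_of_nonneg (dd_nonneg x z)]
  exact dd_le_one x z

lemma indic_le_dd {x y : X} (h : x ≠ y) (z : X) : indic x z ≤ dd y z := by
  by_cases hz : z = y
  · subst hz
    rw [dd_apply_self, indic_apply_ne (Ne.symm h)]
  · rw [dd_apply_ne hz]
    by_cases hx : z = x
    · subst hx; rw [indic_apply_self]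
    · rw [indic_apply_ne hx]; norm_num

end DD
section Key
variable {X : Type*} [TopologicalSpace X] [DiscreteTopology X] [Nonempty X]

local notation "ℬ" => BoundedContinuousFunction X ℝ

lemma key_step {T : ℝ → Op X}
    (hT : ∀ t : ℝ, 0 ≤ t → IsSublinearTransition (T t))
    (hTsg : ∀ s t : ℝ, 0 ≤ s → 0 ≤ t → T (s + t) = T s ∘ T t)
    {t s : ℝ} (ht : 0 ≤ t) (hs : 0 ≤ s) (x : X) {A : ℝ}
    (hA : ∀ y, T t (dd y) y ≤ A)
    (hc : 0 ≤ 1 - A - T t (dd x) x) :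
    T t (dd x) x + (1 - A - T t (dd x) x) * T s (dd x) x ≤ T (s + t) (dd x) x := by
  set α := T t (dd x) x with hα
  set c := 1 - A - α with hcdef
  have hval : ∀ y, (const X α + c • dd x) y = α + c * dd x y := by
    intro y; simp
  have step1 : ∀ y, (const X α + c • dd x) y ≤ T t (dd x) y := by
    intro y
    by_cases hy : y = x
    · subst hy
      rw [hval, dd_apply_self]
      simp [hα]
    · rw [hval, dd_apply_ne hy]
      have he : dd x + (indic x - const X 1) = 0 := by
        ext z; simp [dd]
      have hsub := (hT t ht).2.1 (dd x) (indic x - const X 1) y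
      rw [he, sl_zero (hT t ht)] at hsub
      simp only [BoundedContinuousFunction.coe_zero, Pi.zero_apply] at hsub
      have he2 : indic x - const X 1 = indic x + const X (-1) := by
        ext z; simp [sub_eq_add_neg]
      have htr : T t (indic x - const X 1) y = T t (indic x) y + (-1) := by
        rw [he2, sl_translate (hT t ht)]
      have hmono : T t (indic x) y ≤ T t (dd y) y :=
        sl_mono (hT t ht) (indic_le_dd (fun h => hy h.symm)) y
      have hAy := hA y
      rw [htr] at hsub
      linarith
  have hst : T (s + t) (dd x) x = T s (T t (dd x)) x := by
    rw [hTsg s t hs ht]; rfl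
  have step2 : T s (const X α + c • dd x) x ≤ T (s + t) (dd x) x := by
    rw [hst]
    exact sl_mono (hT s hs) step1 x
  have step3 : T s (const X α + c • dd x) x = α + c * T s (dd x) x := by
    have hcomm : const X α + c • dd x = c • dd x + const X α := by ring
    rw [hcomm, sl_translate (hT s hs), (hT s hs).1 c hc (dd x)]
    simp only [BoundedContinuousFunction.coe_smul, Pi.smul_apply, smul_eq_mul]
    ring
  rw [step3] at step2
  exact step2

lemma key_iter {T : ℝ → Op X}
    (hT : ∀ t : ℝ, 0 ≤ t → IsSublinearTransition (T t))
    (hT0 : T 0 = id)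
    (hTsg : ∀ s t : ℝ, 0 ≤ s → 0 ≤ t → T (s + t) = T s ∘ T t)
    {t : ℝ} (ht : 0 ≤ t) (x : X) {A : ℝ}
    (hA : ∀ y, T t (dd y) y ≤ A)
    (hc : 0 ≤ 1 - A - T t (dd x) x) (n : ℕ) :
    T t (dd x) x * ∑ j ∈ Finset.range n, (1 - A - T t (dd x) x) ^ j
      ≤ T ((n : ℝ) * t) (dd x) x := by
  induction n with
  | zero =>
      simp [hT0, dd_apply_self]
  | succ k ih =>
      have hks : (((k + 1 : ℕ)) : ℝ) * t = (k : ℝ) * t + t := by push_cast; ring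
      have hstep := key_step (s := (k : ℝ) * t) hT hTsg ht (by positivity) x hA hc
      rw [hks]
      set α := T t (dd x) x
      set c := 1 - A - α
      calc α * ∑ j ∈ Finset.range (k + 1), c ^ j
          = α + c * (α * ∑ j ∈ Finset.range k, c ^ j) := by
            rw [geom_sum_succ]; ring
        _ ≤ α + c * T ((k : ℝ) * t) (dd x) x := by
            have := mul_le_mul_of_nonneg_left ih hc
            linarith
        _ ≤ T ((k : ℝ) * t + t) (dd x) x := hstep

end Key
section Alpha
variable {X : Type*} [TopologicalSpace X] [DiscreteTopology X] [Nonempty X]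

local notation "ℬ" => BoundedContinuousFunction X ℝ

lemma alpha_le_of_real {T : ℝ → Op X} {s : ℝ} {r : ℝ}
    (hreal : ∀ f : ℬ, ‖T s f - f‖ ≤ r * ‖f‖) (y : X) (hr : 0 ≤ r) :
    T s (dd y) y ≤ r := by
  have h1 : T s (dd y) y = (T s (dd y) - dd y) y := by
    simp [dd_apply_self]
  rw [h1]
  calc (T s (dd y) - dd y) y ≤ |(T s (dd y) - dd y) y| := le_abs_self _
    _ ≤ ‖T s (dd y) - dd y‖ := by
        rw [← Real.norm_eq_abs]
        exact BoundedContinuousFunction.norm_coe_le_norm _ y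
    _ ≤ r * ‖dd y‖ := hreal (dd y)
    _ ≤ r * 1 := mul_le_mul_of_nonneg_left (dd_norm_le y) hr
    _ = r := mul_one r

set_option maxHeartbeats 1000000 in
lemma alpha_bound {T : ℝ → Op X}
    (hT : ∀ t : ℝ, 0 ≤ t → IsSublinearTransition (T t))
    (hT0 : T 0 = id)
    (hTsg : ∀ s t : ℝ, 0 ≤ s → 0 ≤ t → T (s + t) = T s ∘ T t)
    {t0 : ℝ} (ht0 : 0 < t0)
    (hreal : ∀ s : ℝ, 0 < s → s ≤ t0 → ∀ f : ℬ, ‖T s f - f‖ ≤ (1/100) * ‖f‖)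
    {t : ℝ} (ht : 0 < t) (htle : t ≤ t0) (x : X) :
    T t (dd x) x ≤ (100 / t0) * t := by
  by_contra hcon
  push_neg at hcon
  set A := ⨆ y, T t (dd y) y with hAdef
  have hbd : ∀ y, T t (dd y) y ≤ 1/100 :=
    fun y => alpha_le_of_real (hreal t ht htle) y (by norm_num)
  have hAb : BddAbove (Set.range fun y => T t (dd y) y) :=
    ⟨1/100, by rintro _ ⟨y, rfl⟩; exact hbd y⟩
  have hA100 : A ≤ 1/100 := ciSup_le hbd
  have hKtA : (100 / t0) * t < A := lt_of_lt_of_le hcon (le_ciSup hAb x)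
  obtain ⟨x', hx'⟩ := exists_lt_of_lt_ciSup
    (show (A + (100 / t0) * t) / 2 < A by linarith)
  set α := T t (dd x') x' with hαdef
  have hKT : (100 / t0) * t < α := by
    have h0 : 0 < (100 / t0) * t := by positivity
    linarith
  have hαA : α ≤ A := le_ciSup hAb x'
  have hKt_pos : 0 < (100 / t0) * t := by positivity
  have hA2α : A < 2 * α := by linarith
  have hα0 : 0 < α := lt_trans (by positivity) hKT
  have hα100 : α ≤ 1/100 := hbd x'
  set c := 1 - A - α with hcdef
  have hApos : 0 < A := lt_of_lt_of_le hα0 hαA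
  have hc0 : 0 ≤ c := by
    simp only [hcdef]
    linarith
  obtain ⟨n, hn1, hn2, hnpos⟩ :
      ∃ n : ℕ, 1/10 < (n : ℝ) * α ∧ (n : ℝ) ≤ 1/(5*α) ∧ 0 < (n : ℝ) := by
    refine ⟨Nat.floor (1/(10*α)) + 1, ?_, ?_, ?_⟩
    · have h := Nat.lt_floor_add_one (1/(10*α))
      have h' : 1/(10*α) < ((Nat.floor (1/(10*α)) + 1 : ℕ) : ℝ) := by
        push_cast; linarith
      have h2 : 1 < ((Nat.floor (1/(10*α)) + 1 : ℕ) : ℝ) * (10 * α) :=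
        (div_lt_iff₀ (by positivity)).mp h'
      linarith
    · have hge1 : (1:ℝ) ≤ 1/(10*α) := by
        rw [le_div_iff₀ (by positivity)]
        linarith
      have hfl : ((Nat.floor (1/(10*α)) : ℕ) : ℝ) ≤ 1/(10*α) := Nat.floor_le (by positivity)
      have hhalf : 1/(10*α) + 1/(10*α) = 1/(5*α) := by ring
      push_cast
      linarith
    · positivity
  have hnt_pos : 0 < (n : ℝ) * t := by positivity
  have h100t : 100 * t < α * t0 := by
    rw [div_mul_eq_mul_div] at hKT
    have := (div_lt_iff₀ ht0).mp hKT
    linarith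
  have hnt_le : (n : ℝ) * t ≤ t0 := by
    have h1 : (n : ℝ) * t ≤ (1/(5*α)) * t := mul_le_mul_of_nonneg_right hn2 ht.le
    have h2 : (1/(5*α)) * t ≤ t0 := by
      rw [div_mul_eq_mul_div, div_le_iff₀ (by positivity)]
      nlinarith
    linarith
  have hAy : ∀ y, T t (dd y) y ≤ A := fun y => le_ciSup hAb y
  have hiter := key_iter hT hT0 hTsg ht.le x' hAy hc0 n
  set βn := T ((n:ℝ)*t) (dd x') x' with hβdef
  have hβle : βn ≤ 1/100 :=
    alpha_le_of_real (hreal ((n:ℝ)*t) hnt_pos hnt_le) x' (by norm_num)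
  rw [← hαdef] at hiter
  rw [← hcdef] at hiter
  clear_value βn c α A
  clear hT hT0 hTsg hreal hbd hAb hAy hαdef hβdef hAdef hcon hx'
  have hα1 : α ≤ 1 := by linarith
  have hc_le : c ≤ 1 - α := by simp only [hcdef]; linarith
  have hcn_le : c^n ≤ (1-α)^n := pow_le_pow_left₀ hc0 hc_le n
  have hpow_nonneg : (0:ℝ) ≤ (1-α)^n := pow_nonneg (by linarith) n
  have hber0 : 1 + (n:ℝ)*α ≤ (1+α)^n := by
    have := one_add_mul_le_pow (a := α) (by linarith) n
    linarith [this]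
  have hber : (1 + (n:ℝ)*α) * (1-α)^n ≤ 1 := by
    calc (1 + (n:ℝ)*α) * (1-α)^n ≤ (1+α)^n * (1-α)^n :=
          mul_le_mul_of_nonneg_right hber0 hpow_nonneg
      _ = ((1+α)*(1-α))^n := (mul_pow _ _ _).symm
      _ = (1 - α^2)^n := by ring_nf
      _ ≤ 1 := pow_le_one₀ (by nlinarith [hα0.le, hα1]) (by nlinarith [sq_nonneg α])
  have hcn_nonneg : (0:ℝ) ≤ c^n := pow_nonneg hc0 n
  have hcn1 : c^n * (1 + (n:ℝ)*α) ≤ 1 := by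
    have h1 : c^n * (1 + (n:ℝ)*α) ≤ (1-α)^n * (1 + (n:ℝ)*α) :=
      mul_le_mul_of_nonneg_right hcn_le (by nlinarith [hn1])
    have h2 : (1-α)^n * (1 + (n:ℝ)*α) = (1 + (n:ℝ)*α) * (1-α)^n := mul_comm _ _
    linarith [h1, hber, h2]
  have hcn_small : c^n ≤ 10/11 := by
    have h3 := mul_le_mul_of_nonneg_left hn1.le hcn_nonneg
    linarith [h3, hcn1, hcn_nonneg]
  have hgeo := geom_sum_mul c n
  have hsum_nonneg : (0:ℝ) ≤ ∑ j ∈ Finset.range n, c^j :=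
    Finset.sum_nonneg fun j _ => pow_nonneg hc0 j
  have hsum_eq : (∑ j ∈ Finset.range n, c^j) * (A + α) = 1 - c^n := by
    have hac : A + α = 1 - c := by simp only [hcdef]; ring
    rw [hac]
    linear_combination -hgeo
  have hAα_pos : 0 < A + α := by linarith
  have hmul := mul_le_mul_of_nonneg_right hiter (le_of_lt hAα_pos)
  have hlhs : (α * ∑ j ∈ Finset.range n, c^j) * (A+α) = α * (1 - c^n) := by
    rw [mul_assoc, hsum_eq]
  rw [hlhs] at hmul
  have hup : βn * (A+α) ≤ (1/100) * (3*α) := by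
    have hβn_nonneg : 0 ≤ βn := le_trans (by nlinarith) hiter
    exact mul_le_mul hβle (by linarith) (le_of_lt hAα_pos) (by norm_num)
  have hlow : α * (1/11) ≤ α * (1 - c^n) :=
    mul_le_mul_of_nonneg_left (by linarith) hα0.le
  linarith

end Alpha
section NormBound
variable {X : Type*} [TopologicalSpace X] [DiscreteTopology X] [Nonempty X]

local notation "ℬ" => BoundedContinuousFunction X ℝ

lemma norm_bound_of_alpha {S : Op X} (hS : IsSublinearTransition S) {b : ℝ}
    (hb : 0 ≤ b) (hα : ∀ x : X, S (dd x) x ≤ b) (f : ℬ) :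
    ‖S f - f‖ ≤ 2 * b * ‖f‖ := by
  refine (BoundedContinuousFunction.norm_le (by positivity)).mpr fun x => ?_
  have key : ∀ g : ℬ, g x = 0 → S g x ≤ 2 * b * ‖f‖ → True := fun _ _ _ => trivial
  set m := f x with hm
  set h : ℬ := f - const X m with hh
  have hfx : S f x = S h x + m := by
    have hfe : f = h + const X m := by ext z; simp [hh]
    rw [hfe, sl_translate hS]
  have hhx : h x = 0 := by simp [hh, hm]
  have hnh : ‖h‖ ≤ 2 * ‖f‖ := by
    have h1 : ‖h‖ ≤ ‖f‖ + ‖const X m‖ := norm_sub_le f (const X m)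
    have h2 : ‖const X m‖ ≤ ‖f‖ := by
      refine (BoundedContinuousFunction.norm_le (norm_nonneg f)).mpr fun z => ?_
      simp only [BoundedContinuousFunction.const_apply]
      exact f.norm_coe_le_norm x
    linarith
  have hptw : ∀ (g : ℬ), g x = 0 → (∀ z, |g z| ≤ ‖h‖) → S g x ≤ 2 * b * ‖f‖ := by
    intro g hgx hgb
    have hle : ∀ z, g z ≤ (‖h‖ • dd x) z := by
      intro z
      simp only [BoundedContinuousFunction.coe_smul, Pi.smul_apply, smul_eq_mul]
      by_cases hz : z = x
      · subst hz; rw [dd_apply_self, hgx]; simp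
      · rw [dd_apply_ne hz, mul_one]
        exact (le_abs_self _).trans (hgb z)
    have h1 : S g x ≤ S (‖h‖ • dd x) x := sl_mono hS hle x
    have h2 : S (‖h‖ • dd x) x = ‖h‖ * S (dd x) x := by
      rw [hS.1 ‖h‖ (norm_nonneg h) (dd x)]
      simp only [BoundedContinuousFunction.coe_smul, Pi.smul_apply, smul_eq_mul]
    have h3 : ‖h‖ * S (dd x) x ≤ ‖h‖ * b :=
      mul_le_mul_of_nonneg_left (hα x) (norm_nonneg h)
    have h4 : ‖h‖ * b ≤ (2 * ‖f‖) * b := mul_le_mul_of_nonneg_right hnh hb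
    calc S g x ≤ ‖h‖ * S (dd x) x := h2 ▸ h1
      _ ≤ ‖h‖ * b := h3
      _ ≤ (2 * ‖f‖) * b := h4
      _ = 2 * b * ‖f‖ := by ring
  have hhb : ∀ z, |h z| ≤ ‖h‖ := fun z => by
    rw [← Real.norm_eq_abs]; exact h.norm_coe_le_norm z
  have hup : S h x ≤ 2 * b * ‖f‖ := hptw h hhx hhb
  have hlow : -S h x ≤ 2 * b * ‖f‖ := by
    have hneg := sl_neg_le hS h x
    have : S (-h) x ≤ 2 * b * ‖f‖ := by
      refine hptw (-h) (by simp [hhx]) (fun z => ?_)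
      simp only [BoundedContinuousFunction.coe_neg, Pi.neg_apply, abs_neg]
      exact hhb z
    linarith
  have : |S h x| ≤ 2 * b * ‖f‖ := abs_le.mpr ⟨by linarith, hup⟩
  calc ‖(S f - f) x‖ = |S h x| := by
        rw [Real.norm_eq_abs]
        congr 1
        simp only [BoundedContinuousFunction.coe_sub, Pi.sub_apply]
        rw [hfx]; ring
    _ ≤ 2 * b * ‖f‖ := this

end NormBound
section Forward
variable {X : Type*} [TopologicalSpace X] [DiscreteTopology X] [Nonempty X]

local notation "ℬ" => BoundedContinuousFunction X ℝ

lemma forward_dir {T : ℝ → Op X}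
    (hT : ∀ t : ℝ, 0 ≤ t → IsSublinearTransition (T t))
    (hT0 : T 0 = id)
    (hTsg : ∀ s t : ℝ, 0 ≤ s → 0 ≤ t → T (s + t) = T s ∘ T t)
    (hUC : IsUniformlyContinuousSG T) :
    Filter.limsup (fun t : ℝ => opSemiNorm (t⁻¹ • (T t - id)))
      (nhdsWithin 0 (Set.Ioi 0)) < ⊤ := by
  have h0 := hUC 0 le_rfl
  simp only [hT0] at h0
  have hc : (0:ℝ≥0∞) < ((1/100 : ℝ≥0) : ℝ≥0∞) := by
    rw [ENNReal.coe_pos]; norm_num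
  have hev : {s : ℝ | opSemiNorm (T s - id) < ((1/100 : ℝ≥0) : ℝ≥0∞)}
      ∈ nhdsWithin (0:ℝ) (Set.Ici 0) := h0 (Iio_mem_nhds hc)
  rw [Metric.mem_nhdsWithin_iff] at hev
  obtain ⟨ε, hε, hsub⟩ := hev
  set t0 := ε/2 with ht0def
  have ht0 : 0 < t0 := by positivity
  have hsmall : ∀ s : ℝ, 0 < s → s ≤ t0 →
      opSemiNorm (T s - id) < ((1/100 : ℝ≥0) : ℝ≥0∞) := by
    intro s h1 h2
    apply hsub
    constructor
    · rw [Metric.mem_ball, Real.dist_eq, sub_zero, abs_of_pos h1]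
      linarith
    · exact h1.le
  have hreal : ∀ s : ℝ, 0 < s → s ≤ t0 → ∀ f : ℬ, ‖T s f - f‖ ≤ (1/100) * ‖f‖ := by
    intro s h1 h2 f
    have hA0 : (T s - id : Op X) 0 = 0 := by
      show T s 0 - 0 = 0
      rw [sl_zero (hT s h1.le), sub_zero]
    have hb := norm_le_of_opSemiNorm_le hA0 (le_of_lt (hsmall s h1 h2)) f
    have hco : (((1/100 : ℝ≥0)) : ℝ) = (1/100 : ℝ) := by norm_num
    rw [hco] at hb
    exact hb
  have hnorm : ∀ t : ℝ, 0 < t → t ≤ t0 → ∀ f : ℬ,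
      ‖T t f - f‖ ≤ 2 * ((100/t0) * t) * ‖f‖ := fun t h1 h2 f =>
    norm_bound_of_alpha (hT t h1.le) (by positivity)
      (fun x => alpha_bound hT hT0 hTsg ht0 hreal h1 h2 x) f
  have hev2 : ∀ᶠ u in nhdsWithin (0:ℝ) (Set.Ioi 0),
      opSemiNorm (u⁻¹ • (T u - id)) ≤ ENNReal.ofReal (200/t0) := by
    filter_upwards [Ioc_mem_nhdsGT_of_mem (Set.mem_Ico.mpr ⟨le_rfl, ht0⟩)] with u hu
    apply opSemiNorm_le_of_norm_le (by positivity)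
    intro f
    have heq : (u⁻¹ • (T u - id) : Op X) f = u⁻¹ • (T u f - f) := rfl
    rw [heq, norm_smul u⁻¹ (T u f - f), Real.norm_eq_abs, abs_of_pos (inv_pos.mpr hu.1)]
    have h1 := hnorm u hu.1 hu.2 f
    have h2 : u⁻¹ * ‖T u f - f‖ ≤ u⁻¹ * (2 * ((100/t0) * u) * ‖f‖) :=
      mul_le_mul_of_nonneg_left h1 (inv_nonneg.mpr hu.1.le)
    have h3 : u⁻¹ * (2 * ((100/t0) * u) * ‖f‖) = (200/t0) * ‖f‖ := by
      have hu0 : u ≠ 0 := ne_of_gt hu.1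
      field_simp
      ring
    linarith
  exact lt_of_le_of_lt (Filter.limsup_le_of_le (by isBoundedDefault) hev2)
    ENNReal.ofReal_lt_top

end Forward
section Reverse
variable {X : Type*} [TopologicalSpace X] [DiscreteTopology X]

local notation "ℬ" => BoundedContinuousFunction X ℝ

lemma opSemiNorm_sub_le {T : ℝ → Op X}
    (hT : ∀ t : ℝ, 0 ≤ t → IsSublinearTransition (T t))
    (hTsg : ∀ s t : ℝ, 0 ≤ s → 0 ≤ t → T (s + t) = T s ∘ T t)
    {s t : ℝ} (hs : 0 ≤ s) (ht : 0 ≤ t) :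
    opSemiNorm (T s - T t) ≤ opSemiNorm (T |s - t| - id) := by
  rcases le_total t s with hts | hst
  · have habs : |s - t| = s - t := abs_of_nonneg (by linarith)
    rw [habs]
    apply opSemiNorm_le_opSemiNorm
    · show T (s - t) 0 - 0 = 0
      rw [sl_zero (hT _ (by linarith)), sub_zero]
    · intro f
      show ‖T s f - T t f‖ ≤ ‖T (s - t) f - f‖
      have hcomp : T s = T t ∘ T (s - t) := by
        have h := hTsg t (s - t) ht (by linarith)
        rwa [show t + (s - t) = s by ring] at h
      rw [hcomp]
      simp only [Function.comp_apply]
      refine (BoundedContinuousFunction.norm_le (norm_nonneg _)).mpr fun x => ?_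
      rw [BoundedContinuousFunction.coe_sub, Pi.sub_apply, Real.norm_eq_abs]
      exact sl_lip (hT t ht) _ _ x
  · have habs : |s - t| = t - s := by
      rw [abs_of_nonpos (by linarith)]; ring
    rw [habs]
    apply opSemiNorm_le_opSemiNorm
    · show T (t - s) 0 - 0 = 0
      rw [sl_zero (hT _ (by linarith)), sub_zero]
    · intro f
      show ‖T s f - T t f‖ ≤ ‖T (t - s) f - f‖
      have hcomp : T t = T s ∘ T (t - s) := by
        have h := hTsg s (t - s) hs (by linarith)
        rwa [show s + (t - s) = t by ring] at h
      rw [hcomp]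
      simp only [Function.comp_apply]
      rw [norm_sub_rev (T (t-s) f) f]
      refine (BoundedContinuousFunction.norm_le (norm_nonneg _)).mpr fun x => ?_
      rw [BoundedContinuousFunction.coe_sub, Pi.sub_apply, Real.norm_eq_abs]
      exact sl_lip (hT s hs) _ _ x

lemma reverse_dir {T : ℝ → Op X}
    (hT : ∀ t : ℝ, 0 ≤ t → IsSublinearTransition (T t))
    (hT0 : T 0 = id)
    (hTsg : ∀ s t : ℝ, 0 ≤ s → 0 ≤ t → T (s + t) = T s ∘ T t)
    (hlim : Filter.limsup (fun t : ℝ => opSemiNorm (t⁻¹ • (T t - id)))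
      (nhdsWithin 0 (Set.Ioi 0)) < ⊤) :
    IsUniformlyContinuousSG T := by
  have hM : Filter.limsup (fun t : ℝ => opSemiNorm (t⁻¹ • (T t - id)))
      (nhdsWithin 0 (Set.Ioi 0)) ≠ ⊤ := hlim.ne
  set C := Filter.limsup (fun t : ℝ => opSemiNorm (t⁻¹ • (T t - id)))
      (nhdsWithin 0 (Set.Ioi 0)) + 1 with hCdef
  have hCne : C ≠ ⊤ := ENNReal.add_ne_top.mpr ⟨hM, ENNReal.one_ne_top⟩
  have hev : ∀ᶠ u in nhdsWithin (0:ℝ) (Set.Ioi 0),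
      opSemiNorm (u⁻¹ • (T u - id)) < C :=
    Filter.eventually_lt_of_limsup_lt (ENNReal.lt_add_right hM one_ne_zero)
  have hφev : ∀ᶠ u in nhdsWithin (0:ℝ) (Set.Ioi 0),
      opSemiNorm (T u - id) ≤ (‖u‖₊ : ℝ≥0∞) * C := by
    filter_upwards [hev, self_mem_nhdsWithin] with u h1 h2
    have hu : (0:ℝ) < u := h2
    have heq : u • (u⁻¹ • (T u - id)) = T u - id := by
      rw [smul_smul, mul_inv_cancel₀ hu.ne', one_smul]
    calc opSemiNorm (T u - id) = opSemiNorm (u • (u⁻¹ • (T u - id))) := by rw [heq]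
      _ ≤ (‖u‖₊ : ℝ≥0∞) * opSemiNorm (u⁻¹ • (T u - id)) := opSemiNorm_smul_le u _
      _ ≤ (‖u‖₊ : ℝ≥0∞) * C := mul_le_mul_right h1.le _
  have hup : Tendsto (fun u : ℝ => (‖u‖₊ : ℝ≥0∞) * C)
      (nhdsWithin (0:ℝ) (Set.Ioi 0)) (nhds 0) := by
    have h1 : Tendsto (fun u : ℝ => ((‖u‖₊ : ℝ≥0) : ℝ≥0∞))
        (nhdsWithin (0:ℝ) (Set.Ioi 0)) (nhds 0) := by
      have h2 : Tendsto (fun u : ℝ => ‖u‖₊) (nhdsWithin (0:ℝ) (Set.Ioi 0)) (nhds 0) := by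
        have := (continuous_nnnorm.tendsto (0:ℝ)).mono_left
          (nhdsWithin_le_nhds (s := Set.Ioi (0:ℝ)))
        simpa using this
      rw [← ENNReal.coe_zero]
      exact ENNReal.tendsto_coe.mpr h2
    have := ENNReal.Tendsto.mul_const h1 (Or.inr hCne)
    simpa using this
  have hphi : Tendsto (fun u : ℝ => opSemiNorm (T u - id))
      (nhdsWithin (0:ℝ) (Set.Ioi 0)) (nhds 0) :=
    tendsto_of_tendsto_of_tendsto_of_le_of_le' tendsto_const_nhds hup
      (Filter.Eventually.of_forall fun _ => zero_le) hφev
  have hzero : opSemiNorm (T (0:ℝ) - id) = 0 := by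
    apply le_antisymm _ zero_le
    apply opSemiNorm_le
    intro f
    have hf : (T (0:ℝ) - id : Op X) f = 0 := by
      show T 0 f - f = 0
      rw [hT0]
      simp
    rw [hf]
    simp
  have hphi0 : Tendsto (fun u : ℝ => opSemiNorm (T u - id))
      (nhdsWithin (0:ℝ) (Set.Ici 0)) (nhds 0) := by
    have hsplit : Set.Ici (0:ℝ) = {0} ∪ Set.Ioi 0 := by
      ext z
      simp only [Set.mem_Ici, Set.mem_union, Set.mem_singleton_iff, Set.mem_Ioi]
      constructor
      · intro h
        rcases eq_or_lt_of_le h with h' | h'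
        · exact Or.inl h'.symm
        · exact Or.inr h'
      · rintro (rfl | h)
        · exact le_rfl
        · exact h.le
    rw [hsplit, nhdsWithin_union, tendsto_sup]
    constructor
    · rw [nhdsWithin_singleton]
      refine tendsto_pure_left.mpr fun s hs => ?_
      simpa [hzero] using mem_of_mem_nhds hs
    · exact hphi
  intro t ht
  have habs_t : Tendsto (fun s : ℝ => |s - t|)
      (nhdsWithin t (Set.Ici 0)) (nhdsWithin (0:ℝ) (Set.Ici 0)) := by
    apply tendsto_nhdsWithin_of_tendsto_nhds_of_eventually_within
    · have h1 : Tendsto (fun s : ℝ => |s - t|) (nhds t) (nhds |t - t|) :=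
        (continuous_abs.comp (continuous_id.sub continuous_const)).tendsto t
      simpa using h1.mono_left nhdsWithin_le_nhds
    · exact Filter.Eventually.of_forall fun s => Set.mem_Ici.mpr (abs_nonneg _)
  have hcomp := hphi0.comp habs_t
  refine tendsto_of_tendsto_of_tendsto_of_le_of_le' tendsto_const_nhds hcomp
    (Filter.Eventually.of_forall fun _ => zero_le) ?_
  filter_upwards [self_mem_nhdsWithin] with s hs
  exact opSemiNorm_sub_le hT hTsg hs ht

end Reverse
section Empty
variable {X : Type*} [TopologicalSpace X] [DiscreteTopology X]

lemma opSemiNorm_of_isEmpty [IsEmpty X] (A : Op X) : opSemiNorm A = 0 := by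
  apply le_antisymm _ zero_le
  refine iSup₂_le fun f hf => absurd ?_ hf
  ext z
  exact (IsEmpty.false z).elim

end Empty

theorem stmt_13 {X : Type*} [Countable X] [TopologicalSpace X] [DiscreteTopology X]
    (T : ℝ → Op X)
    (hT : ∀ t : ℝ, 0 ≤ t → IsSublinearTransition (T t))
    (hT0 : T 0 = id)
    (hTsg : ∀ s t : ℝ, 0 ≤ s → 0 ≤ t → T (s + t) = T s ∘ T t) :
    IsUniformlyContinuousSG T ↔
      Filter.limsup (fun t : ℝ => opSemiNorm (t⁻¹ • (T t - id)))
        (nhdsWithin 0 (Set.Ioi 0)) < ⊤ := by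
  rcases isEmpty_or_nonempty X with hE | hNE
  · constructor
    · intro _
      have h1 : Filter.limsup (fun t : ℝ => opSemiNorm (t⁻¹ • (T t - id)))
          (nhdsWithin 0 (Set.Ioi 0)) ≤ 0 :=
        Filter.limsup_le_of_le (by isBoundedDefault)
          (Filter.Eventually.of_forall fun u => (opSemiNorm_of_isEmpty _).le)
      exact lt_of_le_of_lt h1 (by simp)
    · intro _ t ht
      have h1 : (fun s => opSemiNorm (T s - T t)) = fun _ => (0:ℝ≥0∞) :=
        funext fun s => opSemiNorm_of_isEmpty _
      rw [h1]
      exact tendsto_const_nhds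
  · exact ⟨forward_dir hT hT0 hTsg, reverse_dir hT hT0 hTsg⟩
end
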